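/- arXiv:0906.0693 — 8 statements merged into one kernel-verified Lean document; each statement's English description precedes it below -/
import Mathlib

section
/- Let C₁ and C₂ be disjoint finite sets with |C₁| = s and |C₂| = t, and let i be an integer. Then the number of subsets X ⊆ C₁ ∪ C₂ with (|X ∩ C₂| : ℤ) − (|X ∩ C₁| : ℤ) = i equals the binomial coefficient C(s + t, t − i), interpreted as 0 when t − i < 0 or t − i > s + t. -/
/-- Let `C₁` and `C₂` be disjoint finite sets with `|C₁| = s` and `|C₂| = t`, and let
`i` be an integer.  Then the number of subsets `X ⊆ C₁ ∪ C₂` with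
`(|X ∩ C₂| : ℤ) - (|X ∩ C₁| : ℤ) = i` equals the binomial coefficient `C(s + t, t - i)`,
interpreted as `0` when `t - i < 0` (and `Nat.choose` is already `0` when `t - i > s + t`). -/
theorem card_subsets_with_diff {α : Type*} [DecidableEq α]
    (C₁ C₂ : Finset α) (hdisj : Disjoint C₁ C₂) (s t : ℕ)
    (hs : C₁.card = s) (ht : C₂.card = t) (i : ℤ) :
    ((C₁ ∪ C₂).powerset.filter
        (fun X => ((X ∩ C₂).card : ℤ) - ((X ∩ C₁).card : ℤ) = i)).card
      = if 0 ≤ (t : ℤ) - i then Nat.choose (s + t) ((t : ℤ) - i).toNat else 0 := by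
  have hdl := Finset.disjoint_left.mp hdisj
  have hU : (C₁ ∪ C₂).card = s + t := by
    rw [Finset.card_union_of_disjoint hdisj, hs, ht]
  -- cardinality of the image of the involution
  have hcard : ∀ X : Finset α,
      (((C₁ \ X) ∪ (X ∩ C₂)).card : ℤ) = (s : ℤ) - (X ∩ C₁).card + (X ∩ C₂).card := by
    intro X
    have hd : Disjoint (C₁ \ X) (X ∩ C₂) :=
      hdisj.mono Finset.sdiff_subset Finset.inter_subset_right
    rw [Finset.card_union_of_disjoint hd]
    have h1 : (C₁ \ X).card = C₁.card - (C₁ ∩ X).card := by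
      rw [← Finset.sdiff_inter_self_left, Finset.card_sdiff_of_subset Finset.inter_subset_left]
    have h2 : (C₁ ∩ X).card ≤ C₁.card := Finset.card_le_card Finset.inter_subset_left
    rw [Finset.inter_comm X C₁]
    push_cast
    omega
  -- the involution
  have hsub : ∀ X : Finset α, X ⊆ C₁ ∪ C₂ → (C₁ \ X) ∪ (X ∩ C₂) ⊆ C₁ ∪ C₂ := by
    intro X hX
    exact Finset.union_subset (Finset.sdiff_subset.trans Finset.subset_union_left)
      (Finset.inter_subset_right.trans Finset.subset_union_right)
  have hinv : ∀ X : Finset α, X ⊆ C₁ ∪ C₂ →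
      (C₁ \ ((C₁ \ X) ∪ (X ∩ C₂))) ∪ (((C₁ \ X) ∪ (X ∩ C₂)) ∩ C₂) = X := by
    intro X hX
    ext a
    have h1 := hdl (a := a)
    have h2 : a ∈ X → a ∈ C₁ ∨ a ∈ C₂ := by
      intro h; exact Finset.mem_union.mp (hX h)
    simp only [Finset.mem_union, Finset.mem_sdiff, Finset.mem_inter, not_or, not_and, not_not]
    tauto
  have key : ((C₁ ∪ C₂).powerset.filter
        (fun X => ((X ∩ C₂).card : ℤ) - ((X ∩ C₁).card : ℤ) = i)).card
      = ((C₁ ∪ C₂).powerset.filter (fun Y => (Y.card : ℤ) = (s : ℤ) + i)).card := by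
    apply Finset.card_bij' (fun X _ => (C₁ \ X) ∪ (X ∩ C₂)) (fun Y _ => (C₁ \ Y) ∪ (Y ∩ C₂))
    · intro X hX
      simp only [Finset.mem_filter, Finset.mem_powerset] at hX ⊢
      refine ⟨hsub X hX.1, ?_⟩
      rw [hcard X]
      omega
    · intro Y hY
      simp only [Finset.mem_filter, Finset.mem_powerset] at hY ⊢
      refine ⟨hsub Y hY.1, ?_⟩
      have e1 : ((C₁ \ Y) ∪ (Y ∩ C₂)) ∩ C₂ = Y ∩ C₂ := by
        ext a
        have h1 := hdl (a := a)
        simp only [Finset.mem_union, Finset.mem_sdiff, Finset.mem_inter]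
        tauto
      have e2 : ((C₁ \ Y) ∪ (Y ∩ C₂)) ∩ C₁ = C₁ \ Y := by
        ext a
        have h1 := hdl (a := a)
        simp only [Finset.mem_union, Finset.mem_sdiff, Finset.mem_inter]
        tauto
      rw [e1, e2]
      have := hcard Y
      have hy2 := hY.2
      have hd : Disjoint (C₁ \ Y) (Y ∩ C₂) :=
        hdisj.mono Finset.sdiff_subset Finset.inter_subset_right
      have hc : ((C₁ \ Y) ∪ (Y ∩ C₂)).card = (C₁ \ Y).card + (Y ∩ C₂).card :=
        Finset.card_union_of_disjoint hd
      rw [hc] at this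
      -- also Y.card = (Y∩C₁).card + (Y∩C₂).card
      have hYsplit : Y.card = (Y ∩ C₁).card + (Y ∩ C₂).card := by
        rw [← Finset.card_union_of_disjoint
          (hdisj.mono Finset.inter_subset_right Finset.inter_subset_right),
          ← Finset.inter_union_distrib_left, Finset.inter_eq_left.mpr hY.1]
      push_cast at this ⊢
      omega
    · intro X hX
      simp only [Finset.mem_filter, Finset.mem_powerset] at hX
      exact hinv X hX.1
    · intro Y hY
      simp only [Finset.mem_filter, Finset.mem_powerset] at hY
      exact hinv Y hY.1
  rw [key]
  by_cases h2 : 0 ≤ (s : ℤ) + i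
  · have heq : (C₁ ∪ C₂).powerset.filter (fun Y => (Y.card : ℤ) = (s : ℤ) + i)
        = Finset.powersetCard ((s : ℤ) + i).toNat (C₁ ∪ C₂) := by
      rw [Finset.powersetCard_eq_filter]
      apply Finset.filter_congr
      intro Y _
      constructor <;> intro h <;> omega
    rw [heq, Finset.card_powersetCard, hU]
    by_cases h4 : 0 ≤ (t : ℤ) - i
    · rw [if_pos h4]
      have hle : ((s : ℤ) + i).toNat ≤ s + t := by omega
      have := Nat.choose_symm hle (n := s + t)
      have hdiff : s + t - ((s : ℤ) + i).toNat = ((t : ℤ) - i).toNat := by omega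
      rw [hdiff] at this
      exact this.symm
    · rw [if_neg h4]
      exact Nat.choose_eq_zero_of_lt (by omega)
  · rw [if_pos (by omega : 0 ≤ (t : ℤ) - i),
      Nat.choose_eq_zero_of_lt (by omega)]
    rw [Finset.card_eq_zero, Finset.filter_eq_empty_iff]
    intro Y _ h
    omega
end

section
/- Let A, B be disjoint finsets of a finite set S with Γ = A ∪ B, let (L, R) be a weighing on S, let C₁ = L \ Γ, C₂ = R \ Γ, m = |C₁| + |C₂|, and Λ = Γ ∪ L ∪ R. Then for every v ∈ {<, =, >}, the number of subsets X ⊆ Λ such that the outcome of (A, B) on X is v and |X ∩ L| = |X ∩ R| is at most C(m, ⌊m/2⌋) times the number of subsets Y ⊆ Γ such that the outcome of (A, B) on Y is v. -/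
/-- The outcome of the weighing `(L, R)` on the set `X` of fake (heavier) coins:
the comparison sign obtained by comparing `|X ∩ L|` with `|X ∩ R|`. -/
def weighOutcome {α : Type*} [DecidableEq α] (L R X : Finset α) : Ordering :=
  compare (X ∩ L).card (X ∩ R).card

/-- Let `A, B` be disjoint finsets of a finite set `S` with `Γ = A ∪ B`, let `(L, R)` be a
weighing on `S`, `C₁ = L \ Γ`, `C₂ = R \ Γ`, `m = |C₁| + |C₂|`, and `Λ = Γ ∪ L ∪ R`.
Then for every `v ∈ {<, =, >}`, the number of subsets `X ⊆ Λ` whose outcome under `(A, B)`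
is `v` and with `|X ∩ L| = |X ∩ R|` is at most `C(m, ⌊m/2⌋)` times the number of subsets
`Y ⊆ Γ` whose outcome under `(A, B)` is `v`. -/
theorem card_balanced_le_choose_mul {α : Type*} [DecidableEq α]
    (S A B L R : Finset α)
    (hA : A ⊆ S) (hB : B ⊆ S) (hAB : Disjoint A B)
    (hL : L ⊆ S) (hR : R ⊆ S) (hLR : Disjoint L R)
    (Γ C₁ C₂ Λ : Finset α) (m : ℕ)
    (hΓ : Γ = A ∪ B) (hC₁ : C₁ = L \ Γ) (hC₂ : C₂ = R \ Γ)
    (hm : m = C₁.card + C₂.card) (hΛ : Λ = Γ ∪ L ∪ R) (v : Ordering) :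
    (Λ.powerset.filter
        (fun X => weighOutcome A B X = v ∧ (X ∩ L).card = (X ∩ R).card)).card
      ≤ Nat.choose m (m / 2) *
        (Γ.powerset.filter (fun Y => weighOutcome A B Y = v)).card := by
  classical
  have hC12 : Disjoint C₁ C₂ := by
    rw [hC₁, hC₂]
    exact hLR.mono (Finset.sdiff_subset) (Finset.sdiff_subset)
  -- the map X ↦ X ∩ Γ sends the LHS set into the RHS set
  have hmaps : ∀ X ∈ Λ.powerset.filter
      (fun X => weighOutcome A B X = v ∧ (X ∩ L).card = (X ∩ R).card),
      X ∩ Γ ∈ Γ.powerset.filter (fun Y => weighOutcome A B Y = v) := by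
    intro X hX
    simp only [Finset.mem_filter, Finset.mem_powerset] at hX ⊢
    refine ⟨Finset.inter_subset_right, ?_⟩
    have hAΓ : Γ ∩ A = A := Finset.inter_eq_right.mpr (hΓ ▸ Finset.subset_union_left)
    have hBΓ : Γ ∩ B = B := Finset.inter_eq_right.mpr (hΓ ▸ Finset.subset_union_right)
    have h1 : (X ∩ Γ) ∩ A = X ∩ A := by rw [Finset.inter_assoc, hAΓ]
    have h2 : (X ∩ Γ) ∩ B = X ∩ B := by rw [Finset.inter_assoc, hBΓ]
    unfold weighOutcome
    rw [h1, h2]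
    exact hX.2.1
  refine Finset.card_le_mul_card_image_of_maps_to hmaps _ ?_
  intro Y hY
  -- bound each fiber
  set s := (Λ.powerset.filter
      (fun X => weighOutcome A B X = v ∧ (X ∩ L).card = (X ∩ R).card)).filter
      (fun X => X ∩ Γ = Y) with hsdef
  show s.card ≤ m.choose (m / 2)
  rcases s.eq_empty_or_nonempty with hne | ⟨X₀, hX₀⟩
  · simp [hne]
  -- common facts about elements of the fiber
  have hfib : ∀ X ∈ s, X ⊆ Λ ∧ (X ∩ L).card = (X ∩ R).card ∧ X ∩ Γ = Y := by
    intro X hX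
    simp only [hsdef, Finset.mem_filter, Finset.mem_powerset] at hX
    exact ⟨hX.1.1, hX.1.2.2, hX.2⟩
  -- balance equation in terms of C₁, C₂
  have hbal : ∀ X ∈ s,
      (Y ∩ L).card + (X ∩ C₁).card = (Y ∩ R).card + (X ∩ C₂).card := by
    intro X hX
    obtain ⟨-, hb, hYX⟩ := hfib X hX
    have hLsplit : ((X ∩ L) ∩ Γ).card + ((X ∩ L) \ Γ).card = (X ∩ L).card :=
      Finset.card_inter_add_card_sdiff _ _
    have hRsplit : ((X ∩ R) ∩ Γ).card + ((X ∩ R) \ Γ).card = (X ∩ R).card :=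
      Finset.card_inter_add_card_sdiff _ _
    have e1 : (X ∩ L) ∩ Γ = Y ∩ L := by rw [Finset.inter_right_comm, hYX]
    have e2 : (X ∩ R) ∩ Γ = Y ∩ R := by rw [Finset.inter_right_comm, hYX]
    have e3 : (X ∩ L) \ Γ = X ∩ C₁ := by rw [hC₁, Finset.inter_sdiff_assoc]
    have e4 : (X ∩ R) \ Γ = X ∩ C₂ := by rw [hC₂, Finset.inter_sdiff_assoc]
    rw [e1, e3] at hLsplit
    rw [e2, e4] at hRsplit
    omega
  -- the size of the "flip" image is constant on the fiber
  have hcard : ∀ X ∈ s,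
      (X ∩ C₁).card + (C₂ \ X).card + (Y ∩ L).card
        = (Y ∩ R).card + C₂.card := by
    intro X hX
    have h1 := hbal X hX
    have h2 : (C₂ ∩ X).card + (C₂ \ X).card = C₂.card :=
      Finset.card_inter_add_card_sdiff _ _
    rw [Finset.inter_comm] at h2
    omega
  set k := (X₀ ∩ C₁).card + (C₂ \ X₀).card with hk
  -- injection into fixed-size subsets of C₁ ∪ C₂
  have hinj : s.card ≤ ((C₁ ∪ C₂).powersetCard k).card := by
    apply Finset.card_le_card_of_injOn (fun X => (X ∩ C₁) ∪ (C₂ \ X))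
    · intro X hX
      rw [Finset.mem_coe, Finset.mem_powersetCard]
      constructor
      · exact Finset.union_subset
          ((Finset.inter_subset_right).trans Finset.subset_union_left)
          ((Finset.sdiff_subset).trans Finset.subset_union_right)
      · have hdisj : Disjoint (X ∩ C₁) (C₂ \ X) :=
          hC12.mono Finset.inter_subset_right Finset.sdiff_subset
        rw [Finset.card_union_of_disjoint hdisj]
        have h1 := hcard X hX
        have h2 := hcard X₀ hX₀
        omega
    · intro X hX X' hX' heq
      simp only at heq
      obtain ⟨hXΛ, -, hXΓ⟩ := hfib X hX
      obtain ⟨hX'Λ, -, hX'Γ⟩ := hfib X' hX'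
      ext a
      by_cases haΓ : a ∈ Γ
      · have h1 : a ∈ X ↔ a ∈ Y := by
          rw [← hXΓ]; simp [haΓ]
        have h2 : a ∈ X' ↔ a ∈ Y := by
          rw [← hX'Γ]; simp [haΓ]
        rw [h1, h2]
      by_cases haC₁ : a ∈ C₁
      · have haC₂ : a ∉ C₂ := Finset.disjoint_left.mp hC12 haC₁
        have h1 : a ∈ X ↔ a ∈ (X ∩ C₁) ∪ (C₂ \ X) := by simp [haC₁, haC₂]
        have h2 : a ∈ X' ↔ a ∈ (X' ∩ C₁) ∪ (C₂ \ X') := by simp [haC₁, haC₂]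
        rw [h1, h2, heq]
      by_cases haC₂ : a ∈ C₂
      · have h1 : a ∈ X ↔ a ∉ (X ∩ C₁) ∪ (C₂ \ X) := by simp [haC₁, haC₂]
        have h2 : a ∈ X' ↔ a ∉ (X' ∩ C₁) ∪ (C₂ \ X') := by simp [haC₁, haC₂]
        rw [h1, h2, heq]
      · have haΛ : a ∉ Λ := by
          rw [hΛ]
          simp only [Finset.mem_union]
          rintro ((h | h) | h)
          · exact haΓ (by simpa using h)
          · exact haC₁ (by rw [hC₁]; exact Finset.mem_sdiff.mpr ⟨h, haΓ⟩)
          · exact haC₂ (by rw [hC₂]; exact Finset.mem_sdiff.mpr ⟨h, haΓ⟩)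
        have h1 : a ∉ X := fun h => haΛ (hXΛ h)
        have h2 : a ∉ X' := fun h => haΛ (hX'Λ h)
        simp [h1, h2]
  refine hinj.trans ?_
  rw [Finset.card_powersetCard, Finset.card_union_of_disjoint hC12, ← hm]
  exact Nat.choose_le_middle k m
end

section
/- Let A, B be disjoint finsets with Γ = A ∪ B, and for v ∈ {<, =, >} let N_v denote the number of subsets X ⊆ Γ whose outcome under the weighing (A, B) is v. Then max{N_<, N_=, N_>} is at least 1 if |Γ| = 1, at least 2 if |Γ| = 2, and at least 4 if |Γ| = 3. -/
lemma aux_four_le {α : Type*} [DecidableEq α] (a b c : α)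
    (hab : a ≠ b) (hac : a ≠ c) (hbc : b ≠ c) (Γ : Finset α) (hΓ : Γ = {a} ∪ {b, c}) :
    4 ≤ (Γ.powerset.filter (fun X => weighOutcome {a} {b, c} X = .lt)).card := by
  set S : Finset (Finset α) := {{b}, {c}, {b, c}, {a, b, c}} with hS
  have hsub : S ⊆ Γ.powerset.filter (fun X => weighOutcome {a} {b, c} X = .lt) := by
    intro X hX
    rw [Finset.mem_filter, Finset.mem_powerset]
    simp only [hS, Finset.mem_insert, Finset.mem_singleton] at hX
    have hΓ' : Γ = {a, b, c} := by rw [hΓ]; rfl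
    rcases hX with rfl | rfl | rfl | rfl
    · refine ⟨by intro x hx; simp at hx ⊢; simp [hΓ', hx], ?_⟩
      have e1 : ({b} : Finset α) ∩ {a} = ∅ := by
        ext x; simp only [Finset.mem_inter, Finset.mem_singleton, Finset.notMem_empty, iff_false]
        rintro ⟨rfl, rfl⟩; exact hab rfl
      have e2 : ({b} : Finset α) ∩ {b, c} = {b} :=
        Finset.inter_eq_left.mpr (by intro x hx; simp at hx ⊢; tauto)
      simp only [weighOutcome, e1, e2, Finset.card_empty, Finset.card_singleton]
      decide
    · refine ⟨by intro x hx; simp at hx ⊢; simp [hΓ', hx], ?_⟩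
      have e1 : ({c} : Finset α) ∩ {a} = ∅ := by
        ext x; simp only [Finset.mem_inter, Finset.mem_singleton, Finset.notMem_empty, iff_false]
        rintro ⟨rfl, rfl⟩; exact hac rfl
      have e2 : ({c} : Finset α) ∩ {b, c} = {c} :=
        Finset.inter_eq_left.mpr (by intro x hx; simp at hx ⊢; tauto)
      simp only [weighOutcome, e1, e2, Finset.card_empty, Finset.card_singleton]
      decide
    · refine ⟨by intro x hx; simp at hx ⊢; simp [hΓ', hx], ?_⟩
      have e1 : ({b, c} : Finset α) ∩ {a} = ∅ := by
        ext x; simp only [Finset.mem_inter, Finset.mem_insert, Finset.mem_singleton,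
          Finset.notMem_empty, iff_false]
        rintro ⟨rfl | rfl, rfl⟩
        · exact hab rfl
        · exact hac rfl
      have e2 : ({b, c} : Finset α) ∩ {b, c} = {b, c} := Finset.inter_self _
      have hcard : ({b, c} : Finset α).card = 2 := Finset.card_pair hbc
      simp only [weighOutcome, e1, e2, Finset.card_empty, hcard]
      decide
    · refine ⟨by rw [hΓ'], ?_⟩
      have e1 : ({a, b, c} : Finset α) ∩ {a} = {a} :=
        Finset.inter_eq_right.mpr (by intro x hx; simp at hx ⊢; tauto)
      have e2 : ({a, b, c} : Finset α) ∩ {b, c} = {b, c} :=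
        Finset.inter_eq_right.mpr (by intro x hx; simp at hx ⊢; tauto)
      have hcard : ({b, c} : Finset α).card = 2 := Finset.card_pair hbc
      simp only [weighOutcome, e1, e2, Finset.card_singleton, hcard]
      decide
  have n12 : ({b} : Finset α) ≠ {c} := by
    intro h
    exact hbc (Finset.mem_singleton.mp (h ▸ Finset.mem_singleton_self b))
  have n13 : ({b} : Finset α) ≠ {b, c} := by
    intro h
    have : c ∈ ({b} : Finset α) := by rw [h]; simp
    exact hbc (Finset.mem_singleton.mp this).symm
  have n14 : ({b} : Finset α) ≠ {a, b, c} := by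
    intro h
    have : a ∈ ({b} : Finset α) := by rw [h]; simp
    exact hab (Finset.mem_singleton.mp this)
  have n23 : ({c} : Finset α) ≠ {b, c} := by
    intro h
    have : b ∈ ({c} : Finset α) := by rw [h]; simp
    exact hbc (Finset.mem_singleton.mp this)
  have n24 : ({c} : Finset α) ≠ {a, b, c} := by
    intro h
    have : a ∈ ({c} : Finset α) := by rw [h]; simp
    exact hac (Finset.mem_singleton.mp this)
  have n34 : ({b, c} : Finset α) ≠ {a, b, c} := by
    intro h
    have : a ∈ ({b, c} : Finset α) := by rw [h]; simp
    simp only [Finset.mem_insert, Finset.mem_singleton] at this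
    rcases this with h' | h'
    · exact hab h'
    · exact hac h'
  have hScard : S.card = 4 := by
    rw [hS, Finset.card_insert_of_notMem (by simp [n12, n13, n14]),
      Finset.card_insert_of_notMem (by simp [n23, n24]),
      Finset.card_insert_of_notMem (by simp [n34]), Finset.card_singleton]
  calc 4 = S.card := hScard.symm
    _ ≤ _ := Finset.card_le_card hsub

/-- Let `A, B` be disjoint finsets with `Γ = A ∪ B`, and for `v ∈ {<, =, >}` let `N v` be
the number of subsets `X ⊆ Γ` whose outcome under the weighing `(A, B)` is `v`.  Then
`max {N <, N =, N >}` is at least `1` if `|Γ| = 1`, at least `2` if `|Γ| = 2`, and at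
least `4` if `|Γ| = 3`. -/
theorem max_outcome_count_small {α : Type*} [DecidableEq α]
    (A B : Finset α) (hAB : Disjoint A B) (Γ : Finset α) (hΓ : Γ = A ∪ B)
    (N : Ordering → ℕ)
    (hN : ∀ v, N v = (Γ.powerset.filter (fun X => weighOutcome A B X = v)).card) :
    (Γ.card = 1 → 1 ≤ max (max (N .lt) (N .eq)) (N .gt)) ∧
    (Γ.card = 2 → 2 ≤ max (max (N .lt) (N .eq)) (N .gt)) ∧
    (Γ.card = 3 → 4 ≤ max (max (N .lt) (N .eq)) (N .gt)) := by
  set M := max (max (N .lt) (N .eq)) (N .gt) with hM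
  have h1 : N .lt ≤ M := le_max_of_le_left (le_max_left _ _)
  have h2 : N .eq ≤ M := le_max_of_le_left (le_max_right _ _)
  have h3 : N .gt ≤ M := le_max_right _ _
  have key : N .lt + N .eq + N .gt = 2 ^ Γ.card := by
    rw [hN, hN, hN, Finset.card_filter, Finset.card_filter, Finset.card_filter,
      ← Finset.sum_add_distrib, ← Finset.sum_add_distrib]
    have h : ∀ X ∈ Γ.powerset,
        ((if weighOutcome A B X = .lt then 1 else 0) +
         (if weighOutcome A B X = .eq then 1 else 0) +
         (if weighOutcome A B X = .gt then 1 else 0)) = 1 := by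
      intro X _
      cases h : weighOutcome A B X <;> simp [h]
    rw [Finset.sum_congr rfl h, Finset.sum_const, smul_eq_mul, mul_one, Finset.card_powerset]
  refine ⟨fun hc => ?_, fun hc => ?_, fun hc => ?_⟩
  · rw [hc] at key; omega
  · rw [hc] at key; omega
  rw [hc] at key
  have hcard : A.card + B.card = 3 := by
    rw [← Finset.card_union_of_disjoint hAB, ← hΓ, hc]
  have hA4 : A.card ≤ 3 := by omega
  interval_cases hA : A.card
  · -- A = ∅, N lt ≥ 7
    have hAe : A = ∅ := Finset.card_eq_zero.mp hA
    have hsub : Γ.powerset.erase ∅ ⊆ Γ.powerset.filter (fun X => weighOutcome A B X = .lt) := by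
      intro X hX
      rw [Finset.mem_erase] at hX
      rw [Finset.mem_filter]
      refine ⟨hX.2, ?_⟩
      have hXB : X ∩ B = X := Finset.inter_eq_left.mpr (by
        simpa [hΓ, hAe] using Finset.mem_powerset.mp hX.2)
      simp only [weighOutcome, hAe, Finset.inter_empty, Finset.card_empty, hXB]
      exact Nat.compare_eq_lt.mpr (Finset.card_pos.mpr (Finset.nonempty_iff_ne_empty.mpr hX.1))
    have := Finset.card_le_card hsub
    rw [Finset.card_erase_of_mem (Finset.empty_mem_powerset _), Finset.card_powerset, hc] at this
    rw [hN .lt] at h1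
    omega
  · -- |A| = 1, |B| = 2 : N lt ≥ 4
    have hB2 : B.card = 2 := by omega
    obtain ⟨a, hAe⟩ := Finset.card_eq_one.mp hA
    obtain ⟨b, c, hbc, hBe⟩ := Finset.card_eq_two.mp hB2
    have haB : a ∉ B := fun h => Finset.disjoint_left.mp hAB (hAe ▸ Finset.mem_singleton_self a) h
    rw [hBe] at haB
    simp only [Finset.mem_insert, Finset.mem_singleton] at haB
    push_neg at haB
    have h4 := aux_four_le a b c haB.1 haB.2 hbc Γ (by rw [hΓ, hAe, hBe])
    rw [← hAe, ← hBe, ← hN .lt] at h4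
    omega
  · -- |A| = 2, |B| = 1 : N gt ≥ 4
    have hB1 : B.card = 1 := by omega
    obtain ⟨a, b, hab, hAe⟩ := Finset.card_eq_two.mp hA
    obtain ⟨c, hBe⟩ := Finset.card_eq_one.mp hB1
    have hcA : c ∉ A := fun h => Finset.disjoint_right.mp hAB (hBe ▸ Finset.mem_singleton_self c) h
    rw [hAe] at hcA
    simp only [Finset.mem_insert, Finset.mem_singleton] at hcA
    push_neg at hcA
    have hca : c ≠ a := hcA.1
    have hcb : c ≠ b := hcA.2
    have haux := aux_four_le c a b hca hcb hab Γ (by rw [hΓ, hAe, hBe, Finset.union_comm])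
    have hfe : Γ.powerset.filter (fun X => weighOutcome {c} {a, b} X = .lt)
        = Γ.powerset.filter (fun X => weighOutcome A B X = .gt) := by
      apply Finset.filter_congr
      intro X _
      rw [hAe, hBe]
      simp only [weighOutcome, Nat.compare_eq_lt, Nat.compare_eq_gt]
    rw [hfe, ← hN .gt] at haux
    omega
  · -- A.card = 3, B = ∅, N gt ≥ 7
    have hBe : B = ∅ := Finset.card_eq_zero.mp (by omega)
    have hsub : Γ.powerset.erase ∅ ⊆ Γ.powerset.filter (fun X => weighOutcome A B X = .gt) := by
      intro X hX
      rw [Finset.mem_erase] at hX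
      rw [Finset.mem_filter]
      refine ⟨hX.2, ?_⟩
      have hXA : X ∩ A = X := Finset.inter_eq_left.mpr (by
        simpa [hΓ, hBe] using Finset.mem_powerset.mp hX.2)
      simp only [weighOutcome, hBe, Finset.inter_empty, Finset.card_empty, hXA]
      exact Nat.compare_eq_gt.mpr (Finset.card_pos.mpr (Finset.nonempty_iff_ne_empty.mpr hX.1))
    have := Finset.card_le_card hsub
    rw [Finset.card_erase_of_mem (Finset.empty_mem_powerset _), Finset.card_powerset, hc] at this
    rw [hN .gt] at h3
    omega
end

section
/- Let A, B be disjoint nonempty finsets with Γ = A ∪ B and |Γ| = 5, and for v ∈ {<, =, >} let N_v denote the number of subsets X ⊆ Γ whose outcome under the weighing (A, B) is v. Then max{N_<, N_>} ≥ 16. -/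
lemma aux5 : ∀ A B : Finset (Fin 5), Disjoint A B → A.Nonempty → B.Nonempty →
    A ∪ B = Finset.univ →
    16 ≤ max (((Finset.univ : Finset (Fin 5)).powerset.filter
        (fun X => weighOutcome A B X = .lt)).card)
      (((Finset.univ : Finset (Fin 5)).powerset.filter
        (fun X => weighOutcome A B X = .gt)).card) := by
  decide

/-- Let `A, B` be disjoint nonempty finsets with `Γ = A ∪ B` and `|Γ| = 5`, and for
`v ∈ {<, =, >}` let `N v` be the number of subsets `X ⊆ Γ` whose outcome under the
weighing `(A, B)` is `v`.  Then `max {N <, N >} ≥ 16`. -/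
theorem max_outcome_count_five {α : Type*} [DecidableEq α]
    (A B : Finset α) (hAB : Disjoint A B) (hA : A.Nonempty) (hB : B.Nonempty)
    (Γ : Finset α) (hΓ : Γ = A ∪ B) (hcard : Γ.card = 5)
    (N : Ordering → ℕ)
    (hN : ∀ v, N v = (Γ.powerset.filter (fun X => weighOutcome A B X = v)).card) :
    16 ≤ max (N .lt) (N .gt) := by
  classical
  let e : (Γ : Finset α) ≃ Fin 5 := Finset.equivFinOfCardEq hcard
  set g : α → Fin 5 := fun x => if h : x ∈ Γ then e ⟨x, h⟩ else 0 with hg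
  have hinj : Set.InjOn g ↑Γ := by
    intro x hx y hy hxy
    simp only [Finset.mem_coe] at hx hy
    simp only [hg, dif_pos hx, dif_pos hy] at hxy
    exact Subtype.ext_iff.mp (e.injective hxy)
  have himg : Γ.image g = Finset.univ := by
    apply Finset.eq_univ_of_card
    rw [Finset.card_image_of_injOn hinj, hcard, Fintype.card_fin]
  have hAΓ : A ⊆ Γ := hΓ ▸ Finset.subset_union_left
  have hBΓ : B ⊆ Γ := hΓ ▸ Finset.subset_union_right
  set A' := A.image g with hA'
  set B' := B.image g with hB'
  have hinter : ∀ X Y : Finset α, X ⊆ Γ → Y ⊆ Γ →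
      X.image g ∩ Y.image g = (X ∩ Y).image g := by
    intro X Y hX hY
    refine (Finset.image_inter_of_injOn X Y (hinj.mono ?_)).symm
    intro z hz
    rcases hz with h | h
    exacts [hX h, hY h]
  have hcard_img : ∀ X : Finset α, X ⊆ Γ → (X.image g).card = X.card := fun X hX =>
    Finset.card_image_of_injOn (hinj.mono hX)
  have houtcome : ∀ X : Finset α, X ⊆ Γ →
      weighOutcome A' B' (X.image g) = weighOutcome A B X := by
    intro X hX
    unfold weighOutcome
    rw [hinter X A hX hAΓ, hinter X B hX hBΓ,
      hcard_img _ ((Finset.inter_subset_left).trans hX),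
      hcard_img _ ((Finset.inter_subset_left).trans hX)]
  have hcount : ∀ v, N v = ((Finset.univ : Finset (Fin 5)).powerset.filter
      (fun X => weighOutcome A' B' X = v)).card := by
    intro v
    rw [hN v]
    refine Finset.card_bij (fun X _ => X.image g) ?_ ?_ ?_
    · intro X hX
      simp only [Finset.mem_filter, Finset.mem_powerset] at hX ⊢
      exact ⟨Finset.subset_univ _, by rw [houtcome X hX.1]; exact hX.2⟩
    · intro X hX Y hY hXY
      simp only [Finset.mem_filter, Finset.mem_powerset] at hX hY
      have key : ∀ (Z : Finset α), Z ⊆ Γ → ∀ x, x ∈ Γ → (g x ∈ Z.image g ↔ x ∈ Z) := by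
        intro Z hZ x hx
        constructor
        · intro h
          obtain ⟨y, hy, hxy⟩ := Finset.mem_image.mp h
          rwa [hinj (hZ hy) hx hxy] at hy
        · exact fun h => Finset.mem_image_of_mem _ h
      ext x
      by_cases hx : x ∈ Γ
      · rw [← key X hX.1 x hx, ← key Y hY.1 x hx, hXY]
      · constructor
        · exact fun h => absurd (hX.1 h) hx
        · exact fun h => absurd (hY.1 h) hx
    · intro Y hY
      simp only [Finset.mem_filter, Finset.mem_powerset] at hY
      refine ⟨Γ.filter (fun x => g x ∈ Y), ?_, ?_⟩
      · simp only [Finset.mem_filter, Finset.mem_powerset]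
        constructor
        · exact Finset.filter_subset _ _
        · have himgY : (Γ.filter (fun x => g x ∈ Y)).image g = Y := by
            apply Finset.Subset.antisymm
            · intro y hy
              simp only [Finset.mem_image, Finset.mem_filter] at hy
              obtain ⟨x, ⟨_, hx⟩, rfl⟩ := hy
              exact hx
            · intro y hy
              have : y ∈ Γ.image g := himg ▸ Finset.mem_univ y
              obtain ⟨x, hx, rfl⟩ := Finset.mem_image.mp this
              exact Finset.mem_image.mpr ⟨x, Finset.mem_filter.mpr ⟨hx, hy⟩, rfl⟩
          rw [← houtcome _ (Finset.filter_subset _ _), himgY]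
          exact hY.2
      · apply Finset.Subset.antisymm
        · intro y hy
          simp only [Finset.mem_image, Finset.mem_filter] at hy
          obtain ⟨x, ⟨_, hx⟩, rfl⟩ := hy
          exact hx
        · intro y hy
          have : y ∈ Γ.image g := himg ▸ Finset.mem_univ y
          obtain ⟨x, hx, rfl⟩ := Finset.mem_image.mp this
          exact Finset.mem_image.mpr ⟨x, Finset.mem_filter.mpr ⟨hx, hy⟩, rfl⟩
  have hA'B' : Disjoint A' B' := by
    rw [Finset.disjoint_iff_inter_eq_empty, hA', hB', hinter A B hAΓ hBΓ,
      (Finset.disjoint_iff_inter_eq_empty.mp hAB)]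
    simp
  have hunion : A' ∪ B' = Finset.univ := by
    rw [hA', hB', ← Finset.image_union, ← hΓ, himg]
  have := aux5 A' B' hA'B' (hA.image g) (hB.image g) hunion
  rw [hcount .lt, hcount .gt]
  exact this
end

section
/- Let A, B be disjoint nonempty finsets with Γ = A ∪ B and |Γ| ≥ 6, and for v ∈ {<, =, >} let N_v denote the number of subsets X ⊆ Γ whose outcome under the weighing (A, B) is v. Then 2 · max{N_<, N_>} ≥ 2^{|Γ|} − C(|Γ|, ⌈|Γ|/2⌉). -/
/-- Let `A, B` be disjoint nonempty finsets with `Γ = A ∪ B` and `|Γ| ≥ 6`, and for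
`v ∈ {<, =, >}` let `N v` be the number of subsets `X ⊆ Γ` whose outcome under the
weighing `(A, B)` is `v`.  Then `2 * max {N <, N >} ≥ 2 ^ |Γ| - C(|Γ|, ⌈|Γ|/2⌉)`. -/
theorem max_outcome_count_large {α : Type*} [DecidableEq α]
    (A B : Finset α) (hAB : Disjoint A B) (hA : A.Nonempty) (hB : B.Nonempty)
    (Γ : Finset α) (hΓ : Γ = A ∪ B) (hcard : 6 ≤ Γ.card)
    (N : Ordering → ℕ)
    (hN : ∀ v, N v = (Γ.powerset.filter (fun X => weighOutcome A B X = v)).card) :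
    2 ^ Γ.card - Nat.choose Γ.card ((Γ.card + 1) / 2) ≤ 2 * max (N .lt) (N .gt) := by
  classical
  set n := Γ.card with hn
  -- sum of counts is 2^n
  have hsum : N .lt + N .eq + N .gt = 2 ^ n := by
    have h := Finset.card_eq_sum_card_fiberwise
      (s := Γ.powerset) (t := ({.lt, .eq, .gt} : Finset Ordering))
      (f := fun X => weighOutcome A B X)
      (fun x _ => by cases h : weighOutcome A B x <;> simp [h])
    rw [Finset.card_powerset] at h
    rw [show ({.lt, .eq, .gt} : Finset Ordering) = insert .lt (insert .eq {.gt}) from rfl,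
      Finset.sum_insert (by decide), Finset.sum_insert (by decide),
      Finset.sum_singleton] at h
    beta_reduce at h
    rw [← hn] at h
    rw [hN, hN, hN]
    omega
  -- key recovery lemma
  have key : ∀ X ⊆ Γ, (A \ ((A \ X) ∪ (X ∩ B))) ∪ (((A \ X) ∪ (X ∩ B)) ∩ B) = X := by
    intro X hX
    have hd := Finset.disjoint_left.mp hAB
    ext x
    have h1 : x ∈ X → x ∈ A ∨ x ∈ B := fun h => by
      have := hX h; rw [hΓ] at this; exact Finset.mem_union.mp this
    have h2 : x ∈ A → x ∈ B → False := fun ha hb => hd ha hb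
    simp only [Finset.mem_union, Finset.mem_sdiff, Finset.mem_inter]
    tauto
  -- N eq ≤ choose n |A|
  have heq : N .eq ≤ n.choose A.card := by
    rw [hN, ← Finset.card_powersetCard A.card Γ]
    apply Finset.card_le_card_of_injOn (fun X => (A \ X) ∪ (X ∩ B))
    · intro X hX
      simp only [Finset.mem_coe, Finset.mem_filter, Finset.mem_powerset] at hX
      obtain ⟨hXΓ, hXe⟩ := hX
      have hcc : (X ∩ A).card = (X ∩ B).card := by
        simpa [weighOutcome, compare_eq_iff_eq] using hXe
      rw [Finset.mem_coe, Finset.mem_powersetCard]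
      constructor
      · intro x hx
        rw [hΓ]
        simp only [Finset.mem_union, Finset.mem_sdiff, Finset.mem_inter] at hx ⊢
        tauto
      · have hdisj : Disjoint (A \ X) (X ∩ B) :=
          hAB.mono (Finset.sdiff_subset) (Finset.inter_subset_right)
        rw [Finset.card_union_of_disjoint hdisj]
        have h3 := Finset.card_sdiff_add_card_inter A X
        have h4 : (A ∩ X).card = (X ∩ A).card := by rw [Finset.inter_comm]
        omega
    · intro X hX Y hY h
      simp only [Finset.coe_filter, Set.mem_setOf_eq, Finset.mem_powerset] at hX hY
      have h' : A \ X ∪ X ∩ B = A \ Y ∪ Y ∩ B := h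
      have := key X hX.1
      rw [h', key Y hY.1] at this
      exact this.symm
  -- choose n |A| ≤ choose n ((n+1)/2)
  have hch : n.choose A.card ≤ n.choose ((n + 1) / 2) := by
    have h1 : n.choose A.card ≤ n.choose (n / 2) := Nat.choose_le_middle _ _
    have h2 : n.choose (n / 2) = n.choose ((n + 1) / 2) := by
      have : n / 2 = n - (n + 1) / 2 := by omega
      rw [this, Nat.choose_symm (by omega)]
    omega
  have hl : N .lt ≤ max (N .lt) (N .gt) := le_max_left _ _
  have hg : N .gt ≤ max (N .lt) (N .gt) := le_max_right _ _
  omega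
end

section
/- Let A, B be disjoint finsets of a finite set S with |A| = |B| = 2, let Γ = A ∪ B, let (L, R) be a weighing on S with |(L ∪ R) \ Γ| ≤ 4, and let Λ = Γ ∪ L ∪ R. Then there exists v ∈ {<, =, >} such that 8 times the number of subsets X ⊆ Λ with |X ∩ A| = |X ∩ B| and with outcome of (L, R) on X equal to v is at least 2^{|Λ|}. -/
open Finset

lemma split_card {α : Type*} [DecidableEq α] (s t : Finset α) (hst : Disjoint s t)
    (q : Finset α → Finset α → Prop) [∀ Y Z, Decidable (q Y Z)] :
    ((s ∪ t).powerset.filter (fun X => q (X ∩ s) (X ∩ t))).card =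
      ((s.powerset ×ˢ t.powerset).filter (fun p => q p.1 p.2)).card := by
  apply card_nbij' (fun X => (X ∩ s, X ∩ t)) (fun p => p.1 ∪ p.2)
  · intro X hX
    simp only [mem_coe, mem_filter, mem_powerset, mem_product] at *
    exact ⟨⟨inter_subset_right, inter_subset_right⟩, hX.2⟩
  · intro p hp
    simp only [mem_coe, mem_filter, mem_powerset, mem_product] at *
    obtain ⟨⟨h1, h2⟩, hq⟩ := hp
    have e1 : (p.1 ∪ p.2) ∩ s = p.1 := by
      rw [union_inter_distrib_right, inter_eq_left.2 h1,
        disjoint_iff_inter_eq_empty.1 (hst.symm.mono_left h2), union_empty]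
    have e2 : (p.1 ∪ p.2) ∩ t = p.2 := by
      rw [union_inter_distrib_right, inter_eq_left.2 h2,
        disjoint_iff_inter_eq_empty.1 (hst.mono_left h1), empty_union]
    refine ⟨union_subset (h1.trans subset_union_left) (h2.trans subset_union_right), ?_⟩
    rw [e1, e2]; exact hq
  · intro X hX
    simp only [mem_coe, mem_filter, mem_powerset] at hX
    beta_reduce
    rw [← inter_union_distrib_left, inter_eq_left.2 hX.1]
  · intro p hp
    simp only [mem_coe, mem_filter, mem_powerset, mem_product] at hp
    obtain ⟨⟨h1, h2⟩, _⟩ := hp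
    have e1 : (p.1 ∪ p.2) ∩ s = p.1 := by
      rw [union_inter_distrib_right, inter_eq_left.2 h1,
        disjoint_iff_inter_eq_empty.1 (hst.symm.mono_left h2), union_empty]
    have e2 : (p.1 ∪ p.2) ∩ t = p.2 := by
      rw [union_inter_distrib_right, inter_eq_left.2 h2,
        disjoint_iff_inter_eq_empty.1 (hst.mono_left h1), empty_union]
    beta_reduce
    rw [e1, e2]

lemma pairs_card {α : Type*} [DecidableEq α] (A B : Finset α)
    (hA : A.card = 2) (hB : B.card = 2) :
    ((A.powerset ×ˢ B.powerset).filter (fun p => p.1.card = p.2.card)).card = 6 := by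
  have h1 : ((A.powerset ×ˢ B.powerset).filter (fun p => p.1.card = p.2.card)).card
      = ∑ Y ∈ A.powerset, (B.powerset.filter (fun Z => Y.card = Z.card)).card := by
    rw [card_filter, Finset.sum_product]
    refine Finset.sum_congr rfl fun Y _ => ?_
    rw [card_filter]
  rw [h1]
  have h2 : ∀ Y ∈ A.powerset, (B.powerset.filter (fun Z => Y.card = Z.card)).card
      = Nat.choose 2 Y.card := by
    intro Y _
    have : B.powerset.filter (fun Z => Y.card = Z.card) = B.powersetCard Y.card := by
      rw [powersetCard_eq_filter]
      exact filter_congr fun Z _ => by simp [eq_comm]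
    rw [this, card_powersetCard, hB]
  rw [Finset.sum_congr rfl h2, Finset.sum_powerset]
  have h3 : ∀ j ∈ Finset.range (A.card + 1),
      ∑ Y ∈ A.powersetCard j, Nat.choose 2 Y.card
        = Nat.choose 2 j * Nat.choose 2 j := by
    intro j _
    rw [Finset.sum_congr rfl (fun Y hY => by
      rw [(mem_powersetCard.1 hY).2]), Finset.sum_const, card_powersetCard, hA,
      smul_eq_mul]
  rw [Finset.sum_congr rfl h3, hA]
  decide

/-- Let `A, B` be disjoint finsets of a finite set `S` with `|A| = |B| = 2`, `Γ = A ∪ B`,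
let `(L, R)` be a weighing on `S` with `|(L ∪ R) \ Γ| ≤ 4`, and `Λ = Γ ∪ L ∪ R`.  Then
there is `v ∈ {<, =, >}` such that `8` times the number of subsets `X ⊆ Λ` with
`|X ∩ A| = |X ∩ B|` and outcome of `(L, R)` on `X` equal to `v` is at least `2 ^ |Λ|`. -/
theorem case_two_two {α : Type*} [DecidableEq α]
    (S A B L R : Finset α)
    (hA : A ⊆ S) (hB : B ⊆ S) (hAB : Disjoint A B)
    (hcardA : A.card = 2) (hcardB : B.card = 2)
    (hL : L ⊆ S) (hR : R ⊆ S) (hLR : Disjoint L R)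
    (Γ Λ : Finset α) (hΓ : Γ = A ∪ B) (hΛ : Λ = Γ ∪ L ∪ R)
    (hnew : ((L ∪ R) \ Γ).card ≤ 4) :
    ∃ v : Ordering,
      2 ^ Λ.card ≤ 8 * (Λ.powerset.filter
        (fun X => (X ∩ A).card = (X ∩ B).card ∧ weighOutcome L R X = v)).card := by
  classical
  set T : Finset α := Λ \ Γ with hT
  have hΓΛ : Γ ⊆ Λ := by rw [hΛ]; exact subset_union_left.trans subset_union_left
  have hΛeq : Λ = Γ ∪ T := by rw [hT, union_sdiff_of_subset hΓΛ]
  have hdisj : Disjoint Γ T := disjoint_sdiff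
  have hAΓ : A ⊆ Γ := by rw [hΓ]; exact subset_union_left
  have hBΓ : B ⊆ Γ := by rw [hΓ]; exact subset_union_right
  have hΓcard : Γ.card = 4 := by
    rw [hΓ, card_union_of_disjoint hAB, hcardA, hcardB]
  have hΛcard : Λ.card = 4 + T.card := by
    rw [hΛeq, card_union_of_disjoint hdisj, hΓcard]
  -- total count
  set total : Finset (Finset α) :=
    Λ.powerset.filter (fun X => (X ∩ A).card = (X ∩ B).card) with htotal
  have inner_eq : (Γ.powerset.filter (fun X => (X ∩ A).card = (X ∩ B).card)).card = 6 := by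
    have hΓ' : Γ = A ∪ B := hΓ
    rw [hΓ', split_card A B hAB (fun Y Z => Y.card = Z.card)]
    exact pairs_card A B hcardA hcardB
  have total_card : total.card = 6 * 2 ^ T.card := by
    have hcond : ∀ X ∈ Λ.powerset,
        ((X ∩ A).card = (X ∩ B).card ↔
          ((X ∩ Γ) ∩ A).card = ((X ∩ Γ) ∩ B).card) := by
      intro X _
      rw [inter_assoc, inter_assoc, inter_eq_right.2 hAΓ, inter_eq_right.2 hBΓ]
    rw [htotal, filter_congr hcond, hΛeq,
      split_card Γ T hdisj (fun Y Z => (Y ∩ A).card = (Y ∩ B).card),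
      filter_product_left (fun Y => (Y ∩ A).card = (Y ∩ B).card), card_product,
      inner_eq, card_powerset, card_sdiff_of_subset hΓΛ]
  -- split by outcome
  set c : Ordering → ℕ := fun v => (Λ.powerset.filter
    (fun X => (X ∩ A).card = (X ∩ B).card ∧ weighOutcome L R X = v)).card with hc
  have hcv : ∀ v, c v = (total.filter (fun X => weighOutcome L R X = v)).card := by
    intro v; rw [hc, htotal, filter_filter]
  have hsum : c .lt + c .eq + c .gt = total.card := by
    have hcv' : ∀ v, c v = ∑ X ∈ total, if weighOutcome L R X = v then 1 else 0 :=
      fun v => by rw [hcv v, card_filter]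
    rw [hcv', hcv', hcv', ← Finset.sum_add_distrib, ← Finset.sum_add_distrib,
      card_eq_sum_ones]
    refine Finset.sum_congr rfl fun X _ => ?_
    cases h : weighOutcome L R X <;> simp [h]
  have hbig : 2 * 2 ^ T.card ≤ c .lt ∨ 2 * 2 ^ T.card ≤ c .eq ∨
      2 * 2 ^ T.card ≤ c .gt := by
    rw [total_card] at hsum
    omega
  have hpow : 2 ^ Λ.card = 8 * (2 * 2 ^ T.card) := by
    rw [hΛcard]; ring
  rcases hbig with h | h | h
  · exact ⟨.lt, by rw [hpow]; exact Nat.mul_le_mul_left 8 h⟩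
  · exact ⟨.eq, by rw [hpow]; exact Nat.mul_le_mul_left 8 h⟩
  · exact ⟨.gt, by rw [hpow]; exact Nat.mul_le_mul_left 8 h⟩
end

section
/- Let S be a finite set with |S| = n, and let (A, B) and (L, R) be any two weighings on S. Then there exist v₁, v₂ ∈ {<, =, >} such that 128 times the number of subsets X ⊆ S whose outcome under (A, B) is v₁ and whose outcome under (L, R) is v₂ is at least 15 · 2^n. -/
set_option linter.unusedSectionVars false

namespace ZetaTwoAux

variable {M : Type*} [AddCommGroup M] [DecidableEq M]

def step (w : M) (m : Multiset M) : Multiset M := m + m.map (w + ·)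

def LFOLD : List M → Multiset M
  | [] => {0}
  | w :: t => step w (LFOLD t)

theorem card_LFOLD (l : List M) : Multiset.card (LFOLD l) = 2 ^ l.length := by
  induction l with
  | nil => rfl
  | cons w t ih => simp [LFOLD, step, ih]; ring

theorem map_add_map (u v : M) (m : Multiset M) :
    Multiset.map (u + ·) (Multiset.map (v + ·) m) = Multiset.map ((u + v) + ·) m := by
  rw [Multiset.map_map]
  exact Multiset.map_congr rfl (fun x _ => by simp [Function.comp, add_assoc])

theorem step_comm (w w' : M) (m : Multiset M) : step w (step w' m) = step w' (step w m) := by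
  simp only [step, Multiset.map_add, map_add_map]
  rw [add_comm w w']
  ac_rfl

theorem powerset_sum_eq {α : Type*} [DecidableEq α] (w : α → M) :
    ∀ (l : List M) (S : Finset α), S.val.map w = (↑l : Multiset M) →
      S.powerset.val.map (fun X => X.sum w) = LFOLD l := by
  intro l
  induction l with
  | nil =>
    intro S h
    have hS : S = ∅ := by
      have : S.val = 0 := by
        apply Multiset.eq_zero_of_forall_notMem
        intro a ha
        have : w a ∈ S.val.map w := Multiset.mem_map_of_mem w ha
        rw [h] at this; simp at this
      exact Finset.val_eq_zero.mp this
    subst hS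
    simp [LFOLD]
  | cons w₀ t ih =>
    intro S h
    have hw₀ : w₀ ∈ S.val.map w := by rw [h, ← Multiset.cons_coe]; exact Multiset.mem_cons_self _ _
    obtain ⟨a, haS, haw⟩ := Multiset.mem_map.mp hw₀
    have haS' : a ∈ S := haS
    set S' := S.erase a with hS'
    have hanotin : a ∉ S' := Finset.notMem_erase a S
    have hSval : S.val = a ::ₘ S'.val := by
      rw [hS', Finset.erase_val]
      exact (Multiset.cons_erase haS).symm
    have ht : S'.val.map w = (↑t : Multiset M) := by
      have h2 : S.val.map w = w a ::ₘ S'.val.map w := by rw [hSval, Multiset.map_cons]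
      rw [h2, haw, ← Multiset.cons_coe] at h
      exact (Multiset.cons_inj_right _).mp h
    have hins : S = insert a S' := by rw [hS', Finset.insert_erase haS']
    -- powerset of insert
    have hdisj : Disjoint S'.powerset (S'.powerset.image (insert a)) := by
      rw [Finset.disjoint_left]
      intro X hX hX'
      obtain ⟨Y, _, hY⟩ := Finset.mem_image.mp hX'
      have haX : a ∈ X := by rw [← hY]; exact Finset.mem_insert_self a Y
      exact hanotin (Finset.mem_powerset.mp hX haX)
    have hinj : Set.InjOn (insert a) (S'.powerset : Set (Finset α)) := by
      intro X hX Y hY hXY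
      replace hX : X ∈ S'.powerset := hX
      replace hY : Y ∈ S'.powerset := hY
      have haX : a ∉ X := fun hc => hanotin (Finset.mem_powerset.mp hX hc)
      have haY : a ∉ Y := fun hc => hanotin (Finset.mem_powerset.mp hY hc)
      rw [← Finset.erase_insert haX, ← Finset.erase_insert haY, hXY]
    have hval : (insert a S').powerset.val
        = S'.powerset.val + S'.powerset.val.map (insert a) := by
      rw [Finset.powerset_insert, ← Finset.disjUnion_eq_union _ _ hdisj]
      show S'.powerset.val + (Finset.image (insert a) S'.powerset).val = _
      rw [Finset.image_val_of_injOn hinj]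
    rw [hins, hval, Multiset.map_add]
    have hmap2 : (S'.powerset.val.map (insert a)).map (fun X => X.sum w)
        = (S'.powerset.val.map (fun X => X.sum w)).map (w₀ + ·) := by
      rw [Multiset.map_map, Multiset.map_map]
      apply Multiset.map_congr rfl
      intro X hX
      have hXS' : X ⊆ S' := Finset.mem_powerset.mp hX
      have haX : a ∉ X := fun hc => hanotin (hXS' hc)
      simp [Function.comp, Finset.sum_insert haX, haw]
    rw [hmap2, ih S' ht]
    rfl


/-- counting subsets of `S` whose weighted sum satisfies `q`. -/
theorem card_filter_powerset {α : Type*} [DecidableEq α] (w : α → M) (l : List M)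
    (S : Finset α) (hl : S.val.map w = (↑l : Multiset M))
    (q : M → Prop) [DecidablePred q] :
    (S.powerset.filter (fun X => q (X.sum w))).card
      = Multiset.card ((LFOLD l).filter q) := by
  rw [← powerset_sum_eq w l S hl, Multiset.filter_map]
  rw [Finset.card_def, Finset.filter_val, Multiset.card_map]
  rfl

theorem card_filter_le_of_imp {p q : M → Prop} [DecidablePred p] [DecidablePred q]
    (m : Multiset M) (h : ∀ x, p x → q x) :
    Multiset.card (m.filter p) ≤ Multiset.card (m.filter q) := by
  apply Multiset.card_le_card
  rw [Multiset.le_iff_count]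
  intro a
  rw [Multiset.count_filter, Multiset.count_filter]
  by_cases hp : p a
  · simp [hp, h a hp]
  · simp [hp]

/-- Reflection symmetry: the distribution is invariant under `d ↦ (total sum) - d`. -/
theorem LFOLD_reflect (l : List M) :
    (LFOLD l).map (fun d => l.sum - d) = LFOLD l := by
  induction l with
  | nil => simp [LFOLD]
  | cons w t ih =>
    show (step w (LFOLD t)).map (fun d => (w :: t).sum - d) = step w (LFOLD t)
    rw [List.sum_cons]
    rw [step, Multiset.map_add]
    have h1 : (LFOLD t).map (fun d => w + t.sum - d)
        = ((LFOLD t).map (fun d => t.sum - d)).map (w + ·) := by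
      rw [Multiset.map_map]
      exact Multiset.map_congr rfl (fun x _ => by dsimp only [Function.comp]; abel)
    have h2 : ((LFOLD t).map (w + ·)).map (fun d => w + t.sum - d)
        = (LFOLD t).map (fun d => t.sum - d) := by
      rw [Multiset.map_map]
      exact Multiset.map_congr rfl (fun x _ => by dsimp only [Function.comp]; abel)
    rw [h1, h2, ih]
    exact add_comm _ _

theorem card_filter_reflect (l : List M) (p : M → Prop) [DecidablePred p] :
    Multiset.card ((LFOLD l).filter p)
      = Multiset.card ((LFOLD l).filter (fun d => p (l.sum - d))) := by
  conv_lhs => rw [← LFOLD_reflect l]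
  rw [Multiset.filter_map, Multiset.card_map]
  rfl

/-- Stripping zero-weight coins: they just double the distribution. -/
theorem card_filter_zero_strip (z : ℕ) (t : List M) (p : M → Prop) [DecidablePred p] :
    Multiset.card ((LFOLD (List.replicate z (0:M) ++ t)).filter p)
      = 2 ^ z * Multiset.card ((LFOLD t).filter p) := by
  induction z with
  | zero => simp
  | succ z ih =>
    have : List.replicate (z+1) (0:M) ++ t = 0 :: (List.replicate z (0:M) ++ t) := by
      simp [List.replicate_succ]
    rw [this]
    show Multiset.card ((step 0 _).filter p) = _
    have hzero : step (0:M) (LFOLD (List.replicate z (0:M) ++ t))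
        = LFOLD (List.replicate z (0:M) ++ t) + LFOLD (List.replicate z (0:M) ++ t) := by
      rw [step]
      congr 1
      have : ((0:M) + ·) = id := by funext x; simp
      rw [this, Multiset.map_id]
    rw [hzero, Multiset.filter_add, Multiset.card_add, ih]
    ring


/-! ### 1-D balanced weighing distribution -/

/-- Distribution of `|X ∩ A| - |X ∩ B|` for `|A| = |B| = m`. -/
def Fbal (m : ℕ) : Multiset ℤ :=
  LFOLD (List.replicate m (1:ℤ) ++ List.replicate m (-1))

/-- Number of subsets with difference `d`. -/
def Kc (m : ℕ) (d : ℤ) : ℕ := Multiset.card ((Fbal m).filter (· = d))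

theorem card_filter_step (w : M) (m : Multiset M) (p : M → Prop) [DecidablePred p] :
    Multiset.card ((step w m).filter p)
      = Multiset.card (m.filter p) + Multiset.card (m.filter (fun d => p (w + d))) := by
  rw [step, Multiset.filter_add, Multiset.card_add, Multiset.filter_map, Multiset.card_map]
  rfl

theorem LFOLD_rep_succ (m k : ℕ) :
    LFOLD (List.replicate m (1:ℤ) ++ List.replicate (k+1) (-1))
      = step (-1) (LFOLD (List.replicate m (1:ℤ) ++ List.replicate k (-1))) := by
  induction m with
  | zero => simp [List.replicate_succ, LFOLD]
  | succ m ih =>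
    have e : ∀ j, List.replicate (m+1) (1:ℤ) ++ List.replicate j (-1:ℤ)
        = 1 :: (List.replicate m (1:ℤ) ++ List.replicate j (-1)) := by
      intro j; simp [List.replicate_succ]
    rw [e, e]
    show step 1 _ = step (-1) (step 1 _)
    rw [ih, step_comm]

theorem Fbal_succ (m : ℕ) : Fbal (m+1) = step 1 (step (-1) (Fbal m)) := by
  rw [Fbal, show List.replicate (m+1) (1:ℤ) ++ List.replicate (m+1) (-1:ℤ)
      = 1 :: (List.replicate m (1:ℤ) ++ List.replicate (m+1) (-1)) by simp [List.replicate_succ]]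
  show step 1 _ = _
  rw [LFOLD_rep_succ]
  rfl

theorem Kc_step (w : ℤ) (m : Multiset ℤ) (d : ℤ) :
    Multiset.card ((step w m).filter (· = d))
      = Multiset.card (m.filter (· = d)) + Multiset.card (m.filter (· = d - w)) := by
  rw [card_filter_step]
  congr 1
  apply congrArg
  apply Multiset.filter_congr
  intro x _
  constructor
  · intro h; omega
  · intro h; omega

theorem Kc_rec (m : ℕ) (d : ℤ) :
    Kc (m+1) d = 2 * Kc m d + Kc m (d+1) + Kc m (d-1) := by
  rw [Kc, Fbal_succ, Kc_step, Kc_step, Kc_step]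
  show Kc m d + Kc m (d+1) + (Kc m (d-1) + Kc m (d-1+1)) = _
  have : d - 1 + 1 = d := by ring
  rw [this]
  unfold Kc
  ring

theorem Kc_zero (d : ℤ) : Kc 0 d = if d = 0 then 1 else 0 := by
  rw [Kc]
  show Multiset.card (Multiset.filter (· = d) {0}) = _
  by_cases h : (0:ℤ) = d
  · subst h; simp [Multiset.filter_singleton]
  · rw [Multiset.filter_singleton]
    simp only [eq_comm] at h
    simp [h]
    omega

theorem Kc_symm (m : ℕ) (d : ℤ) : Kc m (-d) = Kc m d := by
  induction m generalizing d with
  | zero => rw [Kc_zero, Kc_zero]; simp [neg_eq_zero]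
  | succ m ih =>
    rw [Kc_rec, Kc_rec]
    have h1 : -d + 1 = -(d-1) := by ring
    have h2 : -d - 1 = -(d+1) := by ring
    rw [h1, h2, ih, ih, ih]
    ring

theorem Kc_mono (m : ℕ) : ∀ d : ℤ, 0 ≤ d → Kc m (d+1) ≤ Kc m d := by
  induction m with
  | zero =>
    intro d hd
    rw [Kc_zero, Kc_zero]
    have : ¬ (d + 1 = 0) := by omega
    simp [this]
  | succ m ih =>
    intro d hd
    rw [Kc_rec, Kc_rec]
    have en : ∀ d' : ℤ, Kc m (d'+1-1) = Kc m d' := by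
      intro d'; congr 1; ring
    rw [en]
    rcases eq_or_lt_of_le hd with h0 | h0
    · -- d = 0
      have hd0 : d = 0 := h0.symm
      subst hd0
      have hsym : Kc m (0-1) = Kc m (0+1) := by
        rw [show (0:ℤ)-1 = -(0+1) by ring, Kc_symm]
      have h1 : Kc m (0+1+1) ≤ Kc m (0+1) := ih (0+1) (by norm_num)
      have h2 : Kc m (0+1) ≤ Kc m 0 := by
        have := ih 0 le_rfl
        rwa [show (0:ℤ)+1 = 0+1 by ring] at this
      omega
    · -- d ≥ 1
      have i1 : Kc m (d+1) ≤ Kc m d := ih d hd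
      have i2 : Kc m d ≤ Kc m (d-1) := by
        have := ih (d-1) (by omega)
        rwa [show d-1+1 = d by ring] at this
      have i3 : Kc m (d+1+1) ≤ Kc m (d+1) := ih (d+1) (by omega)
      omega

theorem Kc_quadruple (m : ℕ) : Kc (m+1) 0 ≤ 4 * Kc m 0 := by
  rw [Kc_rec]
  have h1 : Kc m (0+1) ≤ Kc m 0 := Kc_mono m 0 le_rfl
  have h2 : Kc m (0-1) = Kc m (0+1) := by
    rw [show (0:ℤ)-1 = -(0+1) by ring, Kc_symm]
  omega

theorem Kc_large (m : ℕ) (hm : 4 ≤ m) : 128 * Kc m 0 ≤ 35 * 4 ^ m := by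
  induction m with
  | zero => omega
  | succ m ih =>
    rcases Nat.lt_or_ge m 4 with h | h
    · interval_cases m
      · omega
      · omega
      · omega
      · -- m = 3, so m+1 = 4: need 128 * Kc 4 0 ≤ 35 * 256
        have : Kc 4 0 = 70 := by decide
        rw [this]; norm_num [Prod.ext_iff]
    · have h4 := Kc_quadruple m
      have := ih h
      calc 128 * Kc (m+1) 0 ≤ 128 * (4 * Kc m 0) := by omega
        _ = 4 * (128 * Kc m 0) := by ring
        _ ≤ 4 * (35 * 4 ^ m) := by omega
        _ = 35 * 4 ^ (m+1) := by ring

theorem Kc_force (m : ℕ) (h1 : 38 * 4 ^ m < 128 * Kc m 0)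
    (h2 : 128 * Kc m 0 < 45 * 4 ^ m) : m = 3 := by
  rcases Nat.lt_or_ge m 4 with h | h
  · interval_cases m
    · have : Kc 0 0 = 1 := by decide
      rw [this] at h2; norm_num at h2
    · have : Kc 1 0 = 2 := by decide
      rw [this] at h2; norm_num at h2
    · have : Kc 2 0 = 6 := by decide
      rw [this] at h2; norm_num at h2
    · rfl
  · exfalso
    have := Kc_large m h
    have hp : 0 < 4 ^ m := Nat.pow_pos (by norm_num)
    omega


/-! ### The finite check for the case `|A| = |B| = |L| = |R| = 3` -/

/-- Sign pair of a 2-D difference vector. -/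
def pr (d : ℤ × ℤ) : Ordering × Ordering := (compare d.1 0, compare d.2 0)

/-- The list of weights determined by the cell sizes of the Venn diagram of
`A ∪ B` vs `L ∪ R`. -/
def cellsList (a1 a2 a0 b1 b2 b0 l0 r0 : ℕ) : List (ℤ × ℤ) :=
  List.replicate a1 (1,1) ++ List.replicate a2 (1,-1) ++ List.replicate a0 (1,0) ++
  List.replicate b1 (-1,1) ++ List.replicate b2 (-1,-1) ++ List.replicate b0 (-1,0) ++
  List.replicate l0 (0,1) ++ List.replicate r0 (0,-1)

def allPairs : List (Ordering × Ordering) :=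
  [(Ordering.lt,Ordering.lt),(Ordering.lt,Ordering.eq),(Ordering.lt,Ordering.gt),
   (Ordering.eq,Ordering.lt),(Ordering.eq,Ordering.eq),(Ordering.eq,Ordering.gt),
   (Ordering.gt,Ordering.lt),(Ordering.gt,Ordering.eq),(Ordering.gt,Ordering.gt)]

def checkTuple (a1 a2 a0 b1 b2 b0 l0 r0 : ℕ) : Bool :=
  let m := LFOLD (cellsList a1 a2 a0 b1 b2 b0 l0 r0)
  let T := a1+a2+a0+b1+b2+b0+l0+r0
  allPairs.any
    (fun v => decide (15 * 2^T ≤ 128 * Multiset.card (m.filter (fun d => pr d = v))))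

def checkAll : Bool :=
  (List.range 4).all fun a1 => (List.range 4).all fun a2 =>
    (List.range 4).all fun b1 => (List.range 4).all fun b2 =>
    if a1+a2 ≤ 3 ∧ b1+b2 ≤ 3 ∧ a1+b1 ≤ 3 ∧ a2+b2 ≤ 3 then
      checkTuple a1 a2 (3-a1-a2) b1 b2 (3-b1-b2) (3-a1-b1) (3-a2-b2)
    else true

set_option maxRecDepth 1000000 in
theorem checkAll_true : checkAll = true := by decide

theorem tuple_good (a1 a2 a0 b1 b2 b0 l0 r0 : ℕ)
    (hA : a1 + a2 + a0 = 3) (hB : b1 + b2 + b0 = 3)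
    (hL : a1 + b1 + l0 = 3) (hR : a2 + b2 + r0 = 3) :
    ∃ v : Ordering × Ordering,
      15 * 2 ^ (a1+a2+a0+b1+b2+b0+l0+r0)
        ≤ 128 * Multiset.card ((LFOLD (cellsList a1 a2 a0 b1 b2 b0 l0 r0)).filter
            (fun d => pr d = v)) := by
  have h1 : a1 < 4 := by omega
  have h2 : a2 < 4 := by omega
  have h3 : b1 < 4 := by omega
  have h4 : b2 < 4 := by omega
  have := checkAll_true
  rw [checkAll, List.all_eq_true] at this
  have := this a1 (List.mem_range.mpr h1)
  rw [List.all_eq_true] at this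
  have := this a2 (List.mem_range.mpr h2)
  rw [List.all_eq_true] at this
  have := this b1 (List.mem_range.mpr h3)
  rw [List.all_eq_true] at this
  have := this b2 (List.mem_range.mpr h4)
  rw [if_pos (by omega : a1+a2 ≤ 3 ∧ b1+b2 ≤ 3 ∧ a1+b1 ≤ 3 ∧ a2+b2 ≤ 3)] at this
  have ha0 : 3 - a1 - a2 = a0 := by omega
  have hb0 : 3 - b1 - b2 = b0 := by omega
  have hl0 : 3 - a1 - b1 = l0 := by omega
  have hr0 : 3 - a2 - b2 = r0 := by omega
  rw [ha0, hb0, hl0, hr0, checkTuple, List.any_eq_true] at this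
  obtain ⟨v, _, hv⟩ := this
  exact ⟨v, of_decide_eq_true hv⟩


/-! ### Bridging to `weighOutcome` -/

variable {α : Type*} [DecidableEq α]

/-- The weight of a coin for a single weighing. -/
def wAB (A B : Finset α) (a : α) : ℤ := (if a ∈ A then 1 else 0) - (if a ∈ B then 1 else 0)

theorem sum_wAB (A B X : Finset α) :
    X.sum (wAB A B) = ((X ∩ A).card : ℤ) - (X ∩ B).card := by
  unfold wAB
  rw [Finset.sum_sub_distrib, Finset.sum_ite_mem, Finset.sum_ite_mem]
  simp

theorem compare_nat_int (c1 c2 : ℕ) : compare c1 c2 = compare ((c1:ℤ) - c2) 0 := by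
  rcases Nat.lt_trichotomy c1 c2 with h|h|h
  · rw [compare_lt_iff_lt.mpr h, compare_lt_iff_lt.mpr (by omega : (c1:ℤ)-c2 < 0)]
  · rw [compare_eq_iff_eq.mpr h, compare_eq_iff_eq.mpr (by omega : (c1:ℤ)-c2 = 0)]
  · rw [compare_gt_iff_gt.mpr h, compare_gt_iff_gt.mpr (by omega : (c1:ℤ)-c2 > 0)]

theorem outcome_eq_compare (A B X : Finset α) :
    weighOutcome A B X = compare (X.sum (wAB A B)) 0 := by
  rw [weighOutcome, compare_nat_int, sum_wAB]

theorem wAB_range (A B : Finset α) (a : α) :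
    wAB A B a = 1 ∨ wAB A B a = -1 ∨ wAB A B a = 0 := by
  unfold wAB; split_ifs <;> norm_num

theorem filter_wAB_one (S A B : Finset α) (hA : A ⊆ S) (hAB : Disjoint A B) :
    S.filter (fun a => wAB A B a = 1) = A := by
  ext a
  rw [Finset.mem_filter]
  constructor
  · rintro ⟨-, h⟩
    unfold wAB at h
    by_contra haA
    simp [haA] at h
    split_ifs at h <;> omega
  · intro haA
    refine ⟨hA haA, ?_⟩
    have haB : a ∉ B := Finset.disjoint_left.mp hAB haA
    simp [wAB, haA, haB]

theorem filter_wAB_negone (S A B : Finset α) (hB : B ⊆ S) (hAB : Disjoint A B) :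
    S.filter (fun a => wAB A B a = -1) = B := by
  ext a
  rw [Finset.mem_filter]
  constructor
  · rintro ⟨-, h⟩
    unfold wAB at h
    by_contra haB
    simp [haB] at h
    split_ifs at h <;> omega
  · intro haB
    refine ⟨hB haB, ?_⟩
    have haA : a ∉ A := Finset.disjoint_right.mp hAB haB
    simp [wAB, haA, haB]

/-- Three-way splitting of a cardinality by the values of a function. -/
theorem card_split3 {β γ : Type*} [DecidableEq β] [DecidableEq γ] (P : Finset β) (f : β → γ)
    (x y z : γ) (hxy : x ≠ y) (hxz : x ≠ z) (hyz : y ≠ z)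
    (hcov : ∀ a ∈ P, f a = x ∨ f a = y ∨ f a = z) :
    P.card = (P.filter (f · = x)).card + (P.filter (f · = y)).card
      + (P.filter (f · = z)).card := by
  have hP : P = P.filter (fun a => f a = x ∨ (f a = y ∨ f a = z)) :=
    (Finset.filter_true_of_mem hcov).symm
  have d23 : Disjoint (P.filter (f · = y)) (P.filter (f · = z)) :=
    Finset.disjoint_left.mpr (fun a h1 h2 => hyz
      ((Finset.mem_filter.mp h1).2 ▸ (Finset.mem_filter.mp h2).2 ▸ rfl))
  have d123 : Disjoint (P.filter (f · = x)) ((P.filter (f · = y)) ∪ (P.filter (f · = z))) := by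
    rw [Finset.disjoint_union_right]
    constructor
    · exact Finset.disjoint_left.mpr (fun a h1 h2 => hxy
        ((Finset.mem_filter.mp h1).2 ▸ (Finset.mem_filter.mp h2).2 ▸ rfl))
    · exact Finset.disjoint_left.mpr (fun a h1 h2 => hxz
        ((Finset.mem_filter.mp h1).2 ▸ (Finset.mem_filter.mp h2).2 ▸ rfl))
  conv_lhs => rw [hP]
  rw [Finset.filter_or, Finset.filter_or, Finset.card_union_of_disjoint d123,
    Finset.card_union_of_disjoint d23, add_assoc]

theorem ordering_cov (o : Ordering) : o = .lt ∨ o = .eq ∨ o = .gt := by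
  cases o <;> simp

/-- 1-D decomposition of the weight multiset. -/
theorem decomp1 (S A B : Finset α) (hA : A ⊆ S) (hB : B ⊆ S) (hAB : Disjoint A B) :
    S.val.map (wAB A B) = ((List.replicate (S.card - A.card - B.card) (0:ℤ)
      ++ (List.replicate A.card 1 ++ List.replicate B.card (-1)) : List ℤ) : Multiset ℤ) := by
  have hsplit := card_split3 S (wAB A B) 1 (-1) 0 (by norm_num) (by norm_num) (by norm_num)
    (fun a _ => wAB_range A B a)
  rw [filter_wAB_one S A B hA hAB, filter_wAB_negone S A B hB hAB] at hsplit
  rw [Multiset.ext]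
  intro u
  rw [Multiset.count_map]
  have hflt : Multiset.filter (fun a => u = wAB A B a) S.val
      = (S.filter (fun a => wAB A B a = u)).val := by
    rw [Finset.filter_val]
    exact Multiset.filter_congr (fun a _ => eq_comm)
  rw [hflt, ← Finset.card_def]
  have hrhs : ∀ v : ℤ, Multiset.count v
      ((List.replicate (S.card - A.card - B.card) (0:ℤ)
        ++ (List.replicate A.card 1 ++ List.replicate B.card (-1)) : List ℤ) : Multiset ℤ)
      = (if (0:ℤ) = v then S.card - A.card - B.card else 0)
        + ((if (1:ℤ) = v then A.card else 0) + (if (-1:ℤ) = v then B.card else 0)) := by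
    intro v
    rw [← Multiset.coe_add, ← Multiset.coe_add, Multiset.coe_replicate, Multiset.coe_replicate,
      Multiset.coe_replicate, Multiset.count_add, Multiset.count_add,
      Multiset.count_replicate, Multiset.count_replicate, Multiset.count_replicate]
  rw [hrhs]
  by_cases h1 : u = 1
  · subst h1
    rw [filter_wAB_one S A B hA hAB]
    norm_num
  by_cases h2 : u = -1
  · subst h2
    rw [filter_wAB_negone S A B hB hAB]
    norm_num
  by_cases h0 : u = 0
  · subst h0
    have : (S.filter (fun a => wAB A B a = 0)).card = S.card - A.card - B.card := by omega
    rw [this]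
    norm_num
  · have : S.filter (fun a => wAB A B a = u) = ∅ := by
      apply Finset.filter_eq_empty_iff.mpr
      intro a _
      rcases wAB_range A B a with h|h|h <;> omega
    rw [this]
    have e1 : ¬ ((0:ℤ) = u) := fun h => h0 h.symm
    have e2 : ¬ ((1:ℤ) = u) := fun h => h1 h.symm
    have e3 : ¬ ((-1:ℤ) = u) := fun h => h2 h.symm
    simp [e1, e2, e3]


theorem cards_le (S A B : Finset α) (hA : A ⊆ S) (hB : B ⊆ S) (hAB : Disjoint A B) :
    A.card + B.card ≤ S.card := by
  rw [← Finset.card_union_of_disjoint hAB]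
  exact Finset.card_le_card (Finset.union_subset hA hB)

theorem l1_sum (z a b : ℕ) :
    (List.replicate z (0:ℤ) ++ (List.replicate a 1 ++ List.replicate b (-1))).sum
      = (a:ℤ) - b := by
  simp [List.sum_replicate]
  ring

theorem l1_length (z a b : ℕ) :
    (List.replicate z (0:ℤ) ++ (List.replicate a 1 ++ List.replicate b (-1))).length
      = z + a + b := by
  simp [List.length_replicate]
  ring

/-- If a weighing is unbalanced, some single outcome captures at least half of the subsets. -/
theorem unbalanced_half (S A B : Finset α) (hA : A ⊆ S) (hB : B ⊆ S) (hAB : Disjoint A B)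
    (hne : A.card ≠ B.card) :
    ∃ v1 : Ordering,
      2 ^ S.card ≤ 2 * (S.powerset.filter (fun X => weighOutcome A B X = v1)).card := by
  set l1 : List ℤ := List.replicate (S.card - A.card - B.card) (0:ℤ)
      ++ (List.replicate A.card 1 ++ List.replicate B.card (-1)) with hl1
  have hd : S.val.map (wAB A B) = (l1 : Multiset ℤ) := decomp1 S A B hA hB hAB
  have hab := cards_le S A B hA hB hAB
  have hlen : l1.length = S.card := by rw [hl1, l1_length]; omega
  have hsum : l1.sum = (A.card : ℤ) - B.card := l1_sum _ _ _
  have hcard : Multiset.card (LFOLD l1) = 2 ^ S.card := by rw [card_LFOLD, hlen]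
  rcases hne.lt_or_gt with h | h
  · -- A.card < B.card : use .lt
    refine ⟨.lt, ?_⟩
    have hfc : S.powerset.filter (fun X => weighOutcome A B X = .lt)
        = S.powerset.filter (fun X => X.sum (wAB A B) < 0) := by
      apply Finset.filter_congr
      intro X _
      rw [outcome_eq_compare]
      exact compare_lt_iff_lt
    rw [hfc, card_filter_powerset (wAB A B) l1 S hd (fun d => d < 0)]
    have hrefl : Multiset.card ((LFOLD l1).filter (fun d => 0 ≤ d))
        = Multiset.card ((LFOLD l1).filter (fun d => d ≤ l1.sum)) := by
      rw [card_filter_reflect l1 (fun d => 0 ≤ d)]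
      congr 1
      exact Multiset.filter_congr (fun d _ => by omega)
    have hmono : Multiset.card ((LFOLD l1).filter (fun d => d ≤ l1.sum))
        ≤ Multiset.card ((LFOLD l1).filter (fun d => d < 0)) := by
      apply card_filter_le_of_imp
      intro d hd2
      have : (A.card:ℤ) - B.card ≤ -1 := by
        have : (A.card:ℤ) < B.card := by exact_mod_cast h
        omega
      omega
    have htot : Multiset.card ((LFOLD l1).filter (fun d => d < 0))
        + Multiset.card ((LFOLD l1).filter (fun d => 0 ≤ d)) = 2 ^ S.card := by
      have h2 := congrArg Multiset.card (Multiset.filter_add_not (fun d : ℤ => d < 0) (LFOLD l1))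
      have hnn : (LFOLD l1).filter (fun d : ℤ => ¬ d < 0)
          = (LFOLD l1).filter (fun d => 0 ≤ d) :=
        Multiset.filter_congr (fun d _ => by omega)
      rw [Multiset.card_add, hnn, hcard] at h2
      exact h2
    omega
  · -- B.card < A.card : use .gt
    refine ⟨.gt, ?_⟩
    have hfc : S.powerset.filter (fun X => weighOutcome A B X = .gt)
        = S.powerset.filter (fun X => 0 < X.sum (wAB A B)) := by
      apply Finset.filter_congr
      intro X _
      rw [outcome_eq_compare]
      exact compare_gt_iff_gt
    rw [hfc, card_filter_powerset (wAB A B) l1 S hd (fun d => 0 < d)]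
    have hrefl : Multiset.card ((LFOLD l1).filter (fun d => d ≤ 0))
        = Multiset.card ((LFOLD l1).filter (fun d => l1.sum ≤ d)) := by
      rw [card_filter_reflect l1 (fun d => d ≤ 0)]
      congr 1
      exact Multiset.filter_congr (fun d _ => by omega)
    have hmono : Multiset.card ((LFOLD l1).filter (fun d => l1.sum ≤ d))
        ≤ Multiset.card ((LFOLD l1).filter (fun d => 0 < d)) := by
      apply card_filter_le_of_imp
      intro d hd2
      have : (1:ℤ) ≤ (A.card:ℤ) - B.card := by
        have : (B.card:ℤ) < A.card := by exact_mod_cast h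
        omega
      omega
    have htot : Multiset.card ((LFOLD l1).filter (fun d => 0 < d))
        + Multiset.card ((LFOLD l1).filter (fun d => d ≤ 0)) = 2 ^ S.card := by
      have h2 := congrArg Multiset.card (Multiset.filter_add_not (fun d : ℤ => 0 < d) (LFOLD l1))
      have hnn : (LFOLD l1).filter (fun d : ℤ => ¬ 0 < d)
          = (LFOLD l1).filter (fun d => d ≤ 0) :=
        Multiset.filter_congr (fun d _ => by omega)
      rw [Multiset.card_add, hnn, hcard] at h2
      exact h2
    omega

/-- For a balanced weighing, the number of subsets giving a tie. -/
theorem balanced_eq_count (S A B : Finset α) (hA : A ⊆ S) (hB : B ⊆ S) (hAB : Disjoint A B)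
    (hbal : B.card = A.card) :
    (S.powerset.filter (fun X => weighOutcome A B X = .eq)).card
      = 2 ^ (S.card - 2 * A.card) * Kc A.card 0 := by
  have hd : S.val.map (wAB A B) = ((List.replicate (S.card - A.card - B.card) (0:ℤ)
      ++ (List.replicate A.card 1 ++ List.replicate B.card (-1)) : List ℤ) : Multiset ℤ) :=
    decomp1 S A B hA hB hAB
  rw [hbal] at hd
  have hfc : S.powerset.filter (fun X => weighOutcome A B X = .eq)
      = S.powerset.filter (fun X => X.sum (wAB A B) = 0) := by
    apply Finset.filter_congr
    intro X _
    rw [outcome_eq_compare]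
    exact compare_eq_iff_eq
  rw [hfc, card_filter_powerset (wAB A B) _ S hd (fun d => d = 0),
    card_filter_zero_strip]
  have : S.card - A.card - A.card = S.card - 2 * A.card := by omega
  rw [this]
  rfl


/-! ### 2-D decomposition -/

def nineVals : List (ℤ × ℤ) :=
  [(1,1),(1,-1),(1,0),(-1,1),(-1,-1),(-1,0),(0,1),(0,-1),(0,0)]

theorem wPair_range (A B L R : Finset α) (a : α) :
    (wAB A B a, wAB L R a) ∈ nineVals := by
  unfold wAB nineVals
  split_ifs <;> simp

/-- Decomposition of the 2-D weight multiset into replicates according to the cells. -/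
theorem decomp2 (S : Finset α) (g : α → ℤ × ℤ) (hrange : ∀ a ∈ S, g a ∈ nineVals) :
    S.val.map g = ((List.replicate ((S.filter (fun a => g a = (0,0))).card) ((0,0) : ℤ×ℤ)
      ++ cellsList (S.filter (fun a => g a = (1,1))).card
        (S.filter (fun a => g a = (1,-1))).card
        (S.filter (fun a => g a = (1,0))).card
        (S.filter (fun a => g a = (-1,1))).card
        (S.filter (fun a => g a = (-1,-1))).card
        (S.filter (fun a => g a = (-1,0))).card
        (S.filter (fun a => g a = (0,1))).card
        (S.filter (fun a => g a = (0,-1))).card : List (ℤ×ℤ)) : Multiset (ℤ×ℤ)) := by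
  rw [Multiset.ext]
  intro u
  rw [Multiset.count_map]
  have hflt : Multiset.filter (fun a => u = g a) S.val
      = (S.filter (fun a => g a = u)).val := by
    rw [Finset.filter_val]
    exact Multiset.filter_congr (fun a _ => eq_comm)
  rw [hflt, ← Finset.card_def]
  rw [show (((List.replicate ((S.filter (fun a => g a = (0,0))).card) ((0,0) : ℤ×ℤ)
      ++ cellsList _ _ _ _ _ _ _ _ : List (ℤ×ℤ))) : Multiset (ℤ×ℤ))
      = Multiset.replicate ((S.filter (fun a => g a = (0,0))).card) ((0,0) : ℤ×ℤ)
      + (Multiset.replicate ((S.filter (fun a => g a = (1,1))).card) ((1,1) : ℤ×ℤ)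
      + (Multiset.replicate ((S.filter (fun a => g a = (1,-1))).card) ((1,-1) : ℤ×ℤ)
      + (Multiset.replicate ((S.filter (fun a => g a = (1,0))).card) ((1,0) : ℤ×ℤ)
      + (Multiset.replicate ((S.filter (fun a => g a = (-1,1))).card) ((-1,1) : ℤ×ℤ)
      + (Multiset.replicate ((S.filter (fun a => g a = (-1,-1))).card) ((-1,-1) : ℤ×ℤ)
      + (Multiset.replicate ((S.filter (fun a => g a = (-1,0))).card) ((-1,0) : ℤ×ℤ)
      + (Multiset.replicate ((S.filter (fun a => g a = (0,1))).card) ((0,1) : ℤ×ℤ)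
      + Multiset.replicate ((S.filter (fun a => g a = (0,-1))).card) ((0,-1) : ℤ×ℤ))))))))
      from by
        simp only [cellsList, ← Multiset.coe_add, Multiset.coe_replicate, List.append_assoc]]
  simp only [Multiset.count_add, Multiset.count_replicate]
  by_cases h1 : u = ((1,1) : ℤ×ℤ)
  · subst h1; norm_num [Prod.ext_iff]
  by_cases h2 : u = ((1,-1) : ℤ×ℤ)
  · subst h2; norm_num [Prod.ext_iff]
  by_cases h3 : u = ((1,0) : ℤ×ℤ)
  · subst h3; norm_num [Prod.ext_iff]
  by_cases h4 : u = ((-1,1) : ℤ×ℤ)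
  · subst h4; norm_num [Prod.ext_iff]
  by_cases h5 : u = ((-1,-1) : ℤ×ℤ)
  · subst h5; norm_num [Prod.ext_iff]
  by_cases h6 : u = ((-1,0) : ℤ×ℤ)
  · subst h6; norm_num [Prod.ext_iff]
  by_cases h7 : u = ((0,1) : ℤ×ℤ)
  · subst h7; norm_num [Prod.ext_iff]
  by_cases h8 : u = ((0,-1) : ℤ×ℤ)
  · subst h8; norm_num [Prod.ext_iff]
  by_cases h9 : u = ((0,0) : ℤ×ℤ)
  · subst h9; norm_num [Prod.ext_iff]
  · have hemp : S.filter (fun a => g a = u) = ∅ := by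
      apply Finset.filter_eq_empty_iff.mpr
      intro a ha hga
      apply absurd (hrange a ha)
      rw [hga]
      unfold nineVals
      simp only [List.mem_cons, List.not_mem_nil, or_false]
      push_neg
      exact ⟨h1, h2, h3, h4, h5, h6, h7, h8, h9⟩
    rw [hemp]
    have e1 : ¬ (((1,1):ℤ×ℤ) = u) := fun h => h1 h.symm
    have e2 : ¬ (((1,-1):ℤ×ℤ) = u) := fun h => h2 h.symm
    have e3 : ¬ (((1,0):ℤ×ℤ) = u) := fun h => h3 h.symm
    have e4 : ¬ (((-1,1):ℤ×ℤ) = u) := fun h => h4 h.symm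
    have e5 : ¬ (((-1,-1):ℤ×ℤ) = u) := fun h => h5 h.symm
    have e6 : ¬ (((-1,0):ℤ×ℤ) = u) := fun h => h6 h.symm
    have e7 : ¬ (((0,1):ℤ×ℤ) = u) := fun h => h7 h.symm
    have e8 : ¬ (((0,-1):ℤ×ℤ) = u) := fun h => h8 h.symm
    have e9 : ¬ (((0,0):ℤ×ℤ) = u) := fun h => h9 h.symm
    simp [e1, e2, e3, e4, e5, e6, e7, e8, e9, ← Prod.mk_zero_zero, ← Prod.mk_one_one]


theorem mem_iff_filter_one (S A B : Finset α) (hA : A ⊆ S) (hAB : Disjoint A B) (a : α) :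
    a ∈ A ↔ a ∈ S ∧ wAB A B a = 1 := by
  constructor
  · intro h
    exact ⟨hA h, by simp [wAB, h, Finset.disjoint_left.mp hAB h]⟩
  · rintro ⟨-, h⟩
    by_contra haA
    unfold wAB at h
    simp [haA] at h
    split_ifs at h <;> omega

theorem mem_iff_filter_negone (S A B : Finset α) (hB : B ⊆ S) (hAB : Disjoint A B) (a : α) :
    a ∈ B ↔ a ∈ S ∧ wAB A B a = -1 := by
  constructor
  · intro h
    exact ⟨hB h, by simp [wAB, h, Finset.disjoint_right.mp hAB h]⟩
  · rintro ⟨-, h⟩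
    by_contra haB
    unfold wAB at h
    simp [haB] at h
    split_ifs at h <;> omega

theorem row_cards (S A B L R : Finset α) (hA : A ⊆ S) (hAB : Disjoint A B) :
    A.card = (S.filter (fun a => (wAB A B a, wAB L R a) = (1,1))).card
      + (S.filter (fun a => (wAB A B a, wAB L R a) = (1,-1))).card
      + (S.filter (fun a => (wAB A B a, wAB L R a) = (1,0))).card := by
  have hfilt : ∀ j : ℤ, A.filter (fun a => wAB L R a = j)
      = S.filter (fun a => (wAB A B a, wAB L R a) = (1, j)) := by
    intro j
    ext a
    simp only [Finset.mem_filter, Prod.ext_iff, mem_iff_filter_one S A B hA hAB a]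
    tauto
  have hsplit := card_split3 A (wAB L R) 1 (-1) 0 (by norm_num) (by norm_num) (by norm_num)
    (fun a _ => wAB_range L R a)
  rw [hfilt, hfilt, hfilt] at hsplit
  exact hsplit

theorem row_cards_neg (S A B L R : Finset α) (hB : B ⊆ S) (hAB : Disjoint A B) :
    B.card = (S.filter (fun a => (wAB A B a, wAB L R a) = (-1,1))).card
      + (S.filter (fun a => (wAB A B a, wAB L R a) = (-1,-1))).card
      + (S.filter (fun a => (wAB A B a, wAB L R a) = (-1,0))).card := by
  have hfilt : ∀ j : ℤ, B.filter (fun a => wAB L R a = j)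
      = S.filter (fun a => (wAB A B a, wAB L R a) = (-1, j)) := by
    intro j
    ext a
    simp only [Finset.mem_filter, Prod.ext_iff, mem_iff_filter_negone S A B hB hAB a]
    tauto
  have hsplit := card_split3 B (wAB L R) 1 (-1) 0 (by norm_num) (by norm_num) (by norm_num)
    (fun a _ => wAB_range L R a)
  rw [hfilt, hfilt, hfilt] at hsplit
  omega

theorem col_cards (S A B L R : Finset α) (hL : L ⊆ S) (hLR : Disjoint L R) :
    L.card = (S.filter (fun a => (wAB A B a, wAB L R a) = (1,1))).card
      + (S.filter (fun a => (wAB A B a, wAB L R a) = (-1,1))).card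
      + (S.filter (fun a => (wAB A B a, wAB L R a) = (0,1))).card := by
  have hfilt : ∀ i : ℤ, L.filter (fun a => wAB A B a = i)
      = S.filter (fun a => (wAB A B a, wAB L R a) = (i, 1)) := by
    intro i
    ext a
    simp only [Finset.mem_filter, Prod.ext_iff, mem_iff_filter_one S L R hL hLR a]
    tauto
  have hsplit := card_split3 L (wAB A B) 1 (-1) 0 (by norm_num) (by norm_num) (by norm_num)
    (fun a _ => wAB_range A B a)
  rw [hfilt, hfilt, hfilt] at hsplit
  omega

theorem col_cards_neg (S A B L R : Finset α) (hR : R ⊆ S) (hLR : Disjoint L R) :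
    R.card = (S.filter (fun a => (wAB A B a, wAB L R a) = (1,-1))).card
      + (S.filter (fun a => (wAB A B a, wAB L R a) = (-1,-1))).card
      + (S.filter (fun a => (wAB A B a, wAB L R a) = (0,-1))).card := by
  have hfilt : ∀ i : ℤ, R.filter (fun a => wAB A B a = i)
      = S.filter (fun a => (wAB A B a, wAB L R a) = (i, -1)) := by
    intro i
    ext a
    simp only [Finset.mem_filter, Prod.ext_iff, mem_iff_filter_negone S L R hR hLR a]
    tauto
  have hsplit := card_split3 R (wAB A B) 1 (-1) 0 (by norm_num) (by norm_num) (by norm_num)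
    (fun a _ => wAB_range A B a)
  rw [hfilt, hfilt, hfilt] at hsplit
  omega


theorem ordering_ne_lt_eq : (Ordering.lt) ≠ Ordering.eq := by decide
theorem cnt_two_split (S A B L R : Finset α) (v1 : Ordering) :
    (S.powerset.filter (fun X => weighOutcome A B X = v1)).card
      = (S.powerset.filter (fun X => weighOutcome A B X = v1 ∧ weighOutcome L R X = .lt)).card
      + (S.powerset.filter (fun X => weighOutcome A B X = v1 ∧ weighOutcome L R X = .eq)).card
      + (S.powerset.filter (fun X => weighOutcome A B X = v1 ∧ weighOutcome L R X = .gt)).card := by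
  have h := card_split3 (S.powerset.filter (fun X => weighOutcome A B X = v1))
    (fun X => weighOutcome L R X) .lt .eq .gt (by decide) (by decide) (by decide)
    (fun X _ => ordering_cov _)
  rw [Finset.filter_filter, Finset.filter_filter, Finset.filter_filter] at h
  exact h

theorem cnt_two_split' (S A B L R : Finset α) (v2 : Ordering) :
    (S.powerset.filter (fun X => weighOutcome L R X = v2)).card
      = (S.powerset.filter (fun X => weighOutcome A B X = .lt ∧ weighOutcome L R X = v2)).card
      + (S.powerset.filter (fun X => weighOutcome A B X = .eq ∧ weighOutcome L R X = v2)).card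
      + (S.powerset.filter (fun X => weighOutcome A B X = .gt ∧ weighOutcome L R X = v2)).card := by
  have h := card_split3 (S.powerset.filter (fun X => weighOutcome L R X = v2))
    (fun X => weighOutcome A B X) .lt .eq .gt (by decide) (by decide) (by decide)
    (fun X _ => ordering_cov _)
  rw [Finset.filter_filter, Finset.filter_filter, Finset.filter_filter] at h
  have e : ∀ v1 : Ordering,
      S.powerset.filter (fun X => weighOutcome L R X = v2 ∧ weighOutcome A B X = v1)
        = S.powerset.filter (fun X => weighOutcome A B X = v1 ∧ weighOutcome L R X = v2) :=
    fun v1 => Finset.filter_congr (fun X _ => and_comm)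
  rw [e .lt, e .eq, e .gt] at h
  exact h

theorem top_split (S A B : Finset α) :
    2 ^ S.card
      = (S.powerset.filter (fun X => weighOutcome A B X = .lt)).card
      + (S.powerset.filter (fun X => weighOutcome A B X = .eq)).card
      + (S.powerset.filter (fun X => weighOutcome A B X = .gt)).card := by
  have h := card_split3 S.powerset (fun X => weighOutcome A B X) .lt .eq .gt
    (by decide) (by decide) (by decide) (fun X _ => ordering_cov _)
  rw [Finset.card_powerset] at h
  exact h

end ZetaTwoAux

open ZetaTwoAux

/-- Lemma 2 of the paper (`ζ₂ ≥ 2 ^ n · 15 / 128`): for any finite set `S` with `|S| = n`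
and any two weighings `(A, B)` and `(L, R)` on `S`, there are outcomes `v₁, v₂ ∈ {<, =, >}`
such that `128` times the number of subsets `X ⊆ S` whose outcome under `(A, B)` is `v₁`
and whose outcome under `(L, R)` is `v₂` is at least `15 · 2 ^ n`. -/
theorem zeta_two_bound {α : Type*} [DecidableEq α]
    (S : Finset α) (n : ℕ) (hS : S.card = n)
    (A B L R : Finset α)
    (hA : A ⊆ S) (hB : B ⊆ S) (hAB : Disjoint A B)
    (hL : L ⊆ S) (hR : R ⊆ S) (hLR : Disjoint L R) :
    ∃ v₁ v₂ : Ordering,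
      15 * 2 ^ n ≤ 128 * (S.powerset.filter
        (fun X => weighOutcome A B X = v₁ ∧ weighOutcome L R X = v₂)).card := by
  subst hS
  by_contra hcon
  push_neg at hcon
  have h2n : 1 ≤ 2 ^ S.card := Nat.one_le_two_pow
  -- Case 1: unbalanced first weighing
  by_cases hABbal : A.card = B.card
  swap
  · obtain ⟨v1, hv1⟩ := unbalanced_half S A B hA hB hAB hABbal
    have hsp := cnt_two_split S A B L R v1
    have c1 := hcon v1 .lt
    have c2 := hcon v1 .eq
    have c3 := hcon v1 .gt
    omega
  by_cases hLRbal : L.card = R.card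
  swap
  · obtain ⟨v2, hv2⟩ := unbalanced_half S L R hL hR hLR hLRbal
    have hsp := cnt_two_split' S A B L R v2
    have c1 := hcon .lt v2
    have c2 := hcon .eq v2
    have c3 := hcon .gt v2
    omega
  -- Case 2: both balanced; first force |A| = |B| = |L| = |R| = 3
  have force : ∀ A' B' : Finset α, A' ⊆ S → B' ⊆ S → Disjoint A' B' → A'.card = B'.card →
      (∃ vo : Ordering,
        38 * 2 ^ S.card < 128 * (S.powerset.filter
          (fun X => weighOutcome A' B' X = Ordering.eq)).card ∧
        128 * (S.powerset.filter (fun X => weighOutcome A' B' X = Ordering.eq)).card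
          < 45 * 2 ^ S.card) → A'.card = 3 := by
    intro A' B' hA' hB' hAB' hbal' h
    obtain ⟨-, hlow, hhigh⟩ := h
    have hp1 := balanced_eq_count S A' B' hA' hB' hAB' hbal'.symm
    have hm2 : 2 * A'.card ≤ S.card := by
      have := cards_le S A' B' hA' hB' hAB'
      omega
    have hpow : 2 ^ S.card = 2 ^ (S.card - 2 * A'.card) * 4 ^ A'.card := by
      rw [show (4:ℕ) ^ A'.card = 2 ^ (2 * A'.card) by rw [pow_mul]; norm_num, ← pow_add]
      congr 1
      omega
    rw [hp1] at hlow hhigh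
    apply Kc_force
    · have hx : 2 ^ (S.card - 2 * A'.card) * (38 * 4 ^ A'.card)
          < 2 ^ (S.card - 2 * A'.card) * (128 * Kc A'.card 0) := by
        calc 2 ^ (S.card - 2 * A'.card) * (38 * 4 ^ A'.card)
            = 38 * 2 ^ S.card := by rw [hpow]; ring
          _ < 128 * (2 ^ (S.card - 2 * A'.card) * Kc A'.card 0) := hlow
          _ = 2 ^ (S.card - 2 * A'.card) * (128 * Kc A'.card 0) := by ring
      exact lt_of_mul_lt_mul_left hx (Nat.zero_le _)
    · have hx : 2 ^ (S.card - 2 * A'.card) * (128 * Kc A'.card 0)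
          < 2 ^ (S.card - 2 * A'.card) * (45 * 4 ^ A'.card) := by
        calc 2 ^ (S.card - 2 * A'.card) * (128 * Kc A'.card 0)
            = 128 * (2 ^ (S.card - 2 * A'.card) * Kc A'.card 0) := by ring
          _ < 45 * 2 ^ S.card := hhigh
          _ = 2 ^ (S.card - 2 * A'.card) * (45 * 4 ^ A'.card) := by rw [hpow]; ring
      exact lt_of_mul_lt_mul_left hx (Nat.zero_le _)
  have hA3 : A.card = 3 := by
    apply force A B hA hB hAB hABbal
    refine ⟨.eq, ?_, ?_⟩
    · have htop := top_split S A B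
      have h1 := cnt_two_split S A B L R .lt
      have h2 := cnt_two_split S A B L R .gt
      have c1 := hcon .lt .lt; have c2 := hcon .lt .eq; have c3 := hcon .lt .gt
      have c4 := hcon .gt .lt; have c5 := hcon .gt .eq; have c6 := hcon .gt .gt
      omega
    · have h1 := cnt_two_split S A B L R .eq
      have c1 := hcon .eq .lt; have c2 := hcon .eq .eq; have c3 := hcon .eq .gt
      omega
  have hL3 : L.card = 3 := by
    apply force L R hL hR hLR hLRbal
    refine ⟨.eq, ?_, ?_⟩
    · have htop := top_split S L R
      have h1 := cnt_two_split' S A B L R .lt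
      have h2 := cnt_two_split' S A B L R .gt
      have c1 := hcon .lt .lt; have c2 := hcon .eq .lt; have c3 := hcon .gt .lt
      have c4 := hcon .lt .gt; have c5 := hcon .eq .gt; have c6 := hcon .gt .gt
      omega
    · have h1 := cnt_two_split' S A B L R .eq
      have c1 := hcon .lt .eq; have c2 := hcon .eq .eq; have c3 := hcon .gt .eq
      omega
  have hB3 : B.card = 3 := by omega
  have hR3 : R.card = 3 := by omega
  -- Now the 2-D decomposition
  have hd2 := decomp2 S (fun a => (wAB A B a, wAB L R a)) (fun a _ => wPair_range A B L R a)
  beta_reduce at hd2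
  set c11 := (S.filter (fun a => (wAB A B a, wAB L R a) = (1,1))).card
  set c1m := (S.filter (fun a => (wAB A B a, wAB L R a) = (1,-1))).card
  set c10 := (S.filter (fun a => (wAB A B a, wAB L R a) = (1,0))).card
  set cm1 := (S.filter (fun a => (wAB A B a, wAB L R a) = (-1,1))).card
  set cmm := (S.filter (fun a => (wAB A B a, wAB L R a) = (-1,-1))).card
  set cm0 := (S.filter (fun a => (wAB A B a, wAB L R a) = (-1,0))).card
  set c01 := (S.filter (fun a => (wAB A B a, wAB L R a) = (0,1))).card
  set c0m := (S.filter (fun a => (wAB A B a, wAB L R a) = (0,-1))).card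
  set c00 := (S.filter (fun a => (wAB A B a, wAB L R a) = (0,0))).card
  have r1 : c11 + c1m + c10 = 3 := by
    have := row_cards S A B L R hA hAB; omega
  have r2 : cm1 + cmm + cm0 = 3 := by
    have := row_cards_neg S A B L R hB hAB; omega
  have r3 : c11 + cm1 + c01 = 3 := by
    have := col_cards S A B L R hL hLR; omega
  have r4 : c1m + cmm + c0m = 3 := by
    have := col_cards_neg S A B L R hR hLR; omega
  obtain ⟨v, hv⟩ := tuple_good c11 c1m c10 cm1 cmm cm0 c01 c0m r1 r2 r3 r4
  -- total cardinality
  have hlen : S.card = c00 + (c11+c1m+c10+cm1+cmm+cm0+c01+c0m) := by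
    have := congrArg Multiset.card hd2
    rw [Multiset.card_map] at this
    simp only [Multiset.coe_card, List.length_append, List.length_replicate, cellsList] at this
    rw [← Finset.card_def] at this
    omega
  -- abstract count equals 2^c00 times the concrete one
  have hcnt2 : (S.powerset.filter
        (fun X => weighOutcome A B X = v.1 ∧ weighOutcome L R X = v.2)).card
      = 2 ^ c00 * Multiset.card ((LFOLD (cellsList c11 c1m c10 cm1 cmm cm0 c01 c0m)).filter
          (fun d => pr d = v)) := by
    have hfc : S.powerset.filter
          (fun X => weighOutcome A B X = v.1 ∧ weighOutcome L R X = v.2)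
        = S.powerset.filter (fun X => pr (X.sum (fun a => (wAB A B a, wAB L R a))) = v) := by
      apply Finset.filter_congr
      intro X _
      have hfst : (X.sum (fun a => (wAB A B a, wAB L R a))).1 = X.sum (wAB A B) := by
        rw [Prod.fst_sum]
      have hsnd : (X.sum (fun a => (wAB A B a, wAB L R a))).2 = X.sum (wAB L R) := by
        rw [Prod.snd_sum]
      unfold pr
      rw [hfst, hsnd, ← outcome_eq_compare, ← outcome_eq_compare, Prod.ext_iff]
    rw [hfc, card_filter_powerset (fun a => (wAB A B a, wAB L R a)) _ S hd2 (fun d => pr d = v)]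
    rw [show ((0,0) : ℤ×ℤ) = 0 from Prod.mk_zero_zero]
    rw [card_filter_zero_strip]
  have hfin := hcon v.1 v.2
  rw [hcnt2] at hfin
  have hpowT : 15 * 2 ^ S.card
      = 2 ^ c00 * (15 * 2 ^ (c11+c1m+c10+cm1+cmm+cm0+c01+c0m)) := by
    rw [hlen, pow_add]; ring
  have hstep : 2 ^ c00 * (15 * 2 ^ (c11+c1m+c10+cm1+cmm+cm0+c01+c0m))
      ≤ 2 ^ c00 * (128 * Multiset.card ((LFOLD (cellsList c11 c1m c10 cm1 cmm cm0 c01 c0m)).filter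
          (fun d => pr d = v))) := Nat.mul_le_mul_left _ hv
  have hre : 2 ^ c00 * (128 * Multiset.card ((LFOLD (cellsList c11 c1m c10 cm1 cmm cm0 c01 c0m)).filter
          (fun d => pr d = v)))
      = 128 * (2 ^ c00 * Multiset.card ((LFOLD (cellsList c11 c1m c10 cm1 cmm cm0 c01 c0m)).filter
          (fun d => pr d = v))) := by ring
  omega
end

section
/- Let S be a finite set with |S| = n, and let (A₁, B₁), (A₂, B₂), (A₃, B₃) be any three weighings on S. Then there exist v₁, v₂, v₃ ∈ {<, =, >} such that 2^7 times the number of subsets X ⊆ S whose outcome under (A_i, B_i) is v_i for each i = 1, 2, 3 is at least 5 · 2^n. -/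
open Finset

namespace Zeta3


variable {α : Type*} [DecidableEq α]

lemma compare_add_right (x y c : ℕ) : compare (x + c) (y + c) = compare x y := by
  rcases lt_trichotomy x y with h | h | h
  · rw [Nat.compare_eq_lt.2 (by omega), Nat.compare_eq_lt.2 h]
  · subst h; rw [Nat.compare_eq_eq.2 rfl, Nat.compare_eq_eq.2 rfl]
  · rw [Nat.compare_eq_gt.2 (by omega), Nat.compare_eq_gt.2 h]

/-- executable inner sum -/
def cnt1 (f : ℕ → ℕ) : ℕ → ℕ
  | 0 => f 0
  | k + 1 => cnt1 f k + f (k + 1)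

lemma cnt1_eq (f : ℕ → ℕ) (p : ℕ) : cnt1 f p = ∑ k ∈ Finset.range (p + 1), f k := by
  induction p with
  | zero => simp [cnt1]
  | succ p ih => rw [Finset.sum_range_succ, ← ih]; rfl

/-- the profile-count function -/
def cntL (q : List ℕ → Bool) : List ℕ → ℕ
  | [] => if q [] then 1 else 0
  | p :: ps => cnt1 (fun k => p.choose k * cntL (fun l => q (k :: l)) ps) p

lemma cntL_cons (q : List ℕ → Bool) (p : ℕ) (ps : List ℕ) :
    cntL q (p :: ps) = ∑ k ∈ Finset.range (p + 1), p.choose k * cntL (fun l => q (k :: l)) ps := by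
  rw [cntL, cnt1_eq]

/-- splitting the powerset count along one subset -/
lemma card_filter_split (S P : Finset α) (hP : P ⊆ S) (H : ℕ → Finset α → Bool) :
    (S.powerset.filter (fun X => H (X ∩ P).card (X \ P) = true)).card
    = ∑ k ∈ Finset.range (P.card + 1),
        P.card.choose k * ((S \ P).powerset.filter (fun Y => H k Y = true)).card := by
  have hfib : ∀ X ∈ S.powerset.filter (fun X => H (X ∩ P).card (X \ P) = true),
      X ∩ P ∈ P.powerset := by
    intro X _; simp [Finset.mem_powerset]
  rw [Finset.card_eq_sum_card_fiberwise hfib, Finset.sum_powerset]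
  refine Finset.sum_congr rfl (fun k hk => ?_)
  have hcard : ∀ Z ∈ Finset.powersetCard k P,
      ((S.powerset.filter (fun X => H (X ∩ P).card (X \ P) = true)).filter
        (fun X => X ∩ P = Z)).card
      = ((S \ P).powerset.filter (fun Y => H k Y = true)).card := by
    intro Z hZ
    rw [Finset.mem_powersetCard] at hZ
    obtain ⟨hZP, hZk⟩ := hZ
    apply Finset.card_bij' (fun X _ => X \ P) (fun Y _ => Y ∪ Z)
    · intro X hX
      simp only [Finset.mem_filter, Finset.mem_powerset] at hX ⊢
      obtain ⟨⟨hXS, hH⟩, hXP⟩ := hX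
      refine ⟨fun x hx => ?_, ?_⟩
      · simp only [Finset.mem_sdiff] at hx ⊢
        exact ⟨hXS hx.1, hx.2⟩
      · rwa [hXP, hZk] at hH
    · intro Y hY
      simp only [Finset.mem_filter, Finset.mem_powerset] at hY ⊢
      obtain ⟨hYS, hH⟩ := hY
      have hYP : Disjoint Y P := by
        refine Finset.disjoint_left.2 (fun x hx hxP => ?_)
        exact (Finset.mem_sdiff.1 (hYS hx)).2 hxP
      have h1 : (Y ∪ Z) ∩ P = Z := by
        ext x
        simp only [Finset.mem_inter, Finset.mem_union]
        constructor
        · rintro ⟨hx | hx, hxP⟩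
          · exact absurd hxP (Finset.disjoint_left.1 hYP hx)
          · exact hx
        · intro hx; exact ⟨Or.inr hx, hZP hx⟩
      have h2 : (Y ∪ Z) \ P = Y := by
        rw [Finset.union_sdiff_distrib, Finset.sdiff_eq_empty_iff_subset.2 hZP,
          Finset.union_empty, Finset.sdiff_eq_self_of_disjoint hYP]
      refine ⟨⟨?_, ?_⟩, h1⟩
      · exact Finset.union_subset (fun x hx => (Finset.mem_sdiff.1 (hYS hx)).1) (hZP.trans hP)
      · rw [h1, h2, hZk]; exact hH
    · intro X hX
      simp only [Finset.mem_filter] at hX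
      rw [← hX.2, Finset.sdiff_union_inter]
    · intro Y hY
      simp only [Finset.mem_filter, Finset.mem_powerset] at hY
      have hYP : Disjoint Y P := by
        refine Finset.disjoint_left.2 (fun x hx hxP => ?_)
        exact (Finset.mem_sdiff.1 (hY.1 hx)).2 hxP
      rw [Finset.union_sdiff_distrib, Finset.sdiff_eq_empty_iff_subset.2 hZP,
        Finset.union_empty, Finset.sdiff_eq_self_of_disjoint hYP]
  rw [Finset.sum_congr rfl hcard, Finset.sum_const, Finset.card_powersetCard, smul_eq_mul]

lemma sum_cards_le (S : Finset α) : ∀ (L : List (Finset α)), (∀ P ∈ L, P ⊆ S) →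
    L.Pairwise Disjoint → (L.map Finset.card).sum ≤ S.card := by
  intro L
  induction L generalizing S with
  | nil => intro _ _; simp
  | cons P L ih =>
    intro hsub hdis
    rw [List.pairwise_cons] at hdis
    have h1 : ∀ Q ∈ L, Q ⊆ S \ P := by
      intro Q hQ x hx
      exact Finset.mem_sdiff.2 ⟨hsub Q (List.mem_cons_of_mem _ hQ) hx,
        fun hxP => Finset.disjoint_left.1 (hdis.1 Q hQ).symm hx hxP⟩
    have h2 := ih (S \ P) h1 hdis.2
    have h3 : P ⊆ S := hsub P List.mem_cons_self
    have := Finset.card_sdiff_of_subset h3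
    have h4 := Finset.card_le_card h3
    simp only [List.map_cons, List.sum_cons]
    omega

lemma count_profile (L : List (Finset α)) : ∀ (S : Finset α), (∀ P ∈ L, P ⊆ S) →
    L.Pairwise Disjoint → ∀ (q : List ℕ → Bool),
    (S.powerset.filter (fun X => q (L.map (fun P => (X ∩ P).card)) = true)).card
      = 2 ^ (S.card - (L.map Finset.card).sum) * cntL q (L.map Finset.card) := by
  induction L with
  | nil =>
    intro S _ _ q
    by_cases hq : q [] = true
    · simp [cntL, hq, Finset.filter_true_of_mem, Finset.card_powerset]
    · simp only [List.map_nil, cntL]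
      rw [if_neg (by simpa using hq)]
      simp [Finset.filter_false_of_mem, hq]
  | cons P L ih =>
    intro S hsub hdis q
    rw [List.pairwise_cons] at hdis
    have hP : P ⊆ S := hsub P List.mem_cons_self
    have hmap : ∀ X : Finset α, X ∈ S.powerset →
        (L.map fun Q => (X ∩ Q).card) = (L.map fun Q => ((X \ P) ∩ Q).card) := by
      intro X _
      refine List.map_congr_left (fun Q hQ => ?_)
      have hdQ : Disjoint P Q := hdis.1 Q hQ
      congr 1
      ext x
      simp only [Finset.mem_inter, Finset.mem_sdiff]
      exact ⟨fun ⟨h1, h2⟩ => ⟨⟨h1, fun hxP => Finset.disjoint_left.1 hdQ hxP h2⟩, h2⟩,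
        fun ⟨⟨h1, _⟩, h2⟩ => ⟨h1, h2⟩⟩
    have hcongr : (S.powerset.filter
          (fun X => q ((P :: L).map (fun Q => (X ∩ Q).card)) = true)).card
        = (S.powerset.filter (fun X =>
            (fun k Y => q (k :: L.map (fun Q => (Y ∩ Q).card))) (X ∩ P).card (X \ P) = true)).card := by
      apply Finset.card_bij' (fun X _ => X) (fun X _ => X) <;>
        intro X hX <;> simp only [Finset.mem_filter] at hX ⊢ <;>
        try exact rfl
      · obtain ⟨h1, h2⟩ := hX
        refine ⟨h1, ?_⟩
        simp only [List.map_cons] at h2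
        rwa [hmap X h1] at h2
      · obtain ⟨h1, h2⟩ := hX
        refine ⟨h1, ?_⟩
        simp only [List.map_cons]
        rwa [← hmap X h1] at h2
    rw [hcongr, card_filter_split S P hP (fun k Y => q (k :: L.map (fun Q => (Y ∩ Q).card)))]
    have hsub' : ∀ Q ∈ L, Q ⊆ S \ P := by
      intro Q hQ x hx
      exact Finset.mem_sdiff.2 ⟨hsub Q (List.mem_cons_of_mem _ hQ) hx,
        fun hxP => Finset.disjoint_left.1 (hdis.1 Q hQ).symm hx hxP⟩
    have hSP : (S \ P).card = S.card - P.card := Finset.card_sdiff_of_subset hP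
    have hsums := sum_cards_le (S \ P) L hsub' hdis.2
    calc ∑ k ∈ Finset.range (P.card + 1), P.card.choose k *
          ((S \ P).powerset.filter (fun Y => q (k :: L.map fun Q => (Y ∩ Q).card) = true)).card
        = ∑ k ∈ Finset.range (P.card + 1), P.card.choose k *
          (2 ^ ((S \ P).card - (L.map Finset.card).sum) *
            cntL (fun l => q (k :: l)) (L.map Finset.card)) := by
          refine Finset.sum_congr rfl (fun k _ => ?_)
          rw [ih (S \ P) hsub' hdis.2 (fun l => q (k :: l))]
      _ = 2 ^ (S.card - ((P :: L).map Finset.card).sum) * cntL q ((P :: L).map Finset.card) := by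
          rw [List.map_cons, List.sum_cons, cntL_cons, Finset.mul_sum]
          have hexp : (S \ P).card - (L.map Finset.card).sum
              = S.card - (P.card + (L.map Finset.card).sum) := by omega
          refine Finset.sum_congr rfl (fun k _ => ?_)
          rw [hexp]; ring



lemma cb_bound : ∀ b : ℕ, 5 ≤ b → 64 * Nat.centralBinom b ≤ 19 * 4 ^ b := by
  intro b hb
  induction b with
  | zero => omega
  | succ n ih =>
    rcases Nat.lt_or_ge n 5 with h5 | h5
    · interval_cases n
      · omega
      · omega
      · omega
      · omega
      · decide
    · have ih' := ih (by omega)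
      have key := Nat.succ_mul_centralBinom_succ n
      have h1 : (n+1) * (64 * Nat.centralBinom (n+1)) = (2*(2*n+1)) * (64 * Nat.centralBinom n) := by
        rw [← mul_assoc, mul_comm (n+1) 64, mul_assoc, key]; ring
      have h2 : (2*(2*n+1)) * (64 * Nat.centralBinom n) ≤ (2*(2*n+1)) * (19 * 4^n) :=
        Nat.mul_le_mul_left _ ih'
      have h3 : (2*(2*n+1)) * (19 * 4^n) ≤ (n+1) * (19 * 4^(n+1)) := by
        have : (2*(2*n+1)) ≤ 4*(n+1) := by omega
        calc (2*(2*n+1)) * (19 * 4^n) ≤ (4*(n+1)) * (19 * 4^n) := Nat.mul_le_mul_right _ this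
          _ = (n+1) * (19 * 4^(n+1)) := by ring
      exact Nat.le_of_mul_le_mul_left (by omega : (n+1) * (64 * Nat.centralBinom (n+1)) ≤ (n+1) * (19 * 4^(n+1))) (by omega)

/-- reflection: sum of choose over k ≤ b equals over k ≥ m - b -/
lemma sum_choose_reflect (m b : ℕ) (hb : b ≤ m) :
    ∑ k ∈ (Finset.range (m+1)).filter (· ≤ b), m.choose k
    = ∑ k ∈ (Finset.range (m+1)).filter (m - b ≤ ·), m.choose k := by
  apply Finset.sum_nbij' (fun k => m - k) (fun k => m - k) <;> intro k hk <;>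
    simp only [Finset.mem_filter, Finset.mem_range] at hk ⊢
  · omega
  · omega
  · omega
  · omega
  · exact (Nat.choose_symm (by omega)).symm

lemma sum_split_compare (m b : ℕ) :
    (∑ k ∈ Finset.range (m+1), if compare k b = Ordering.lt then m.choose k else 0)
    + (∑ k ∈ Finset.range (m+1), if compare k b = Ordering.eq then m.choose k else 0)
    + (∑ k ∈ Finset.range (m+1), if compare k b = Ordering.gt then m.choose k else 0)
    = 2 ^ m := by
  rw [← Nat.sum_range_choose m, ← Finset.sum_add_distrib, ← Finset.sum_add_distrib]
  refine Finset.sum_congr rfl (fun k _ => ?_)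
  rcases lt_trichotomy k b with h | h | h
  · rw [if_pos (Nat.compare_eq_lt.2 h), if_neg (by simp [Nat.compare_eq_eq]; omega),
      if_neg (by simp [Nat.compare_eq_gt]; omega)]
    omega
  · rw [if_neg (by simp [Nat.compare_eq_lt]; omega), if_pos (Nat.compare_eq_eq.2 h),
      if_neg (by simp [Nat.compare_eq_gt]; omega)]
    omega
  · rw [if_neg (by simp [Nat.compare_eq_lt]; omega), if_neg (by simp [Nat.compare_eq_eq]; omega),
      if_pos (Nat.compare_eq_gt.2 h)]
    omega

lemma sum_gt_as_filter (m b : ℕ) :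
    (∑ k ∈ Finset.range (m+1), if compare k b = Ordering.gt then m.choose k else 0)
    = ∑ k ∈ (Finset.range (m+1)).filter (b < ·), m.choose k := by
  rw [Finset.sum_filter]
  refine Finset.sum_congr rfl (fun k _ => ?_)
  congr 1
  simp [Nat.compare_eq_gt]

lemma sum_lt_as_filter (m b : ℕ) :
    (∑ k ∈ Finset.range (m+1), if compare k b = Ordering.lt then m.choose k else 0)
    = ∑ k ∈ (Finset.range (m+1)).filter (· < b), m.choose k := by
  rw [Finset.sum_filter]
  refine Finset.sum_congr rfl (fun k _ => ?_)
  congr 1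
  simp [Nat.compare_eq_lt]

lemma sum_eq_val (m b : ℕ) (hb : b ≤ m) :
    (∑ k ∈ Finset.range (m+1), if compare k b = Ordering.eq then m.choose k else 0)
    = m.choose b := by
  have : ∀ k, (compare k b = Ordering.eq) ↔ k = b := fun k => Nat.compare_eq_eq
  calc (∑ k ∈ Finset.range (m+1), if compare k b = Ordering.eq then m.choose k else 0)
      = ∑ k ∈ Finset.range (m+1), if k = b then m.choose k else 0 := by
        refine Finset.sum_congr rfl (fun k _ => ?_); simp [this]
    _ = m.choose b := by
        rw [Finset.sum_ite_eq' (Finset.range (m+1)) b (fun k => m.choose k),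
          if_pos (Finset.mem_range.2 (by omega))]

/-- main 1D numeric fact -/
lemma key1D (m b : ℕ) (hb : b ≤ m) (hex : ¬(m = 6 ∧ b = 3)) :
    ∃ o : Ordering, 45 * 2 ^ m ≤ 128 * ∑ k ∈ Finset.range (m+1),
      (if compare k b = o then m.choose k else 0) := by
  have hsplit := sum_split_compare m b
  rcases Nat.lt_trichotomy (2*b) m with h2b | h2b | h2b
  · -- gt side has at least half
    refine ⟨Ordering.gt, ?_⟩
    rw [sum_gt_as_filter]
    have hle : (∑ k ∈ (Finset.range (m+1)).filter (· ≤ b), m.choose k)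
        ≤ ∑ k ∈ (Finset.range (m+1)).filter (b < ·), m.choose k := by
      rw [sum_choose_reflect m b hb]
      apply Finset.sum_le_sum_of_subset
      intro k hk
      simp only [Finset.mem_filter, Finset.mem_range] at hk ⊢
      omega
    have htot : (∑ k ∈ (Finset.range (m+1)).filter (· ≤ b), m.choose k)
        + (∑ k ∈ (Finset.range (m+1)).filter (b < ·), m.choose k) = 2 ^ m := by
      rw [← Nat.sum_range_choose m]
      rw [← Finset.sum_filter_add_sum_filter_not (Finset.range (m+1)) (· ≤ b)]
      congr 1
      apply Finset.sum_congr _ (fun _ _ => rfl)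
      apply Finset.filter_congr
      intro k _
      simp [Nat.not_le]
    omega
  · -- m = 2b : middle cases
    have hab : m = 2 * b := h2b.symm
    rcases Nat.lt_or_ge b 5 with hb5 | hb5
    · -- b ∈ {0,1,2,4} (3 excluded)
      have hb3 : b ≠ 3 := fun h => hex ⟨by omega, h⟩
      subst hab
      interval_cases b
      · exact ⟨Ordering.eq, by decide⟩
      · exact ⟨Ordering.eq, by decide⟩
      · exact ⟨Ordering.eq, by decide⟩
      · omega
      · exact ⟨Ordering.gt, by decide⟩
    · -- b ≥ 5 : use central binomial bound
      refine ⟨Ordering.gt, ?_⟩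
      have hsym : (∑ k ∈ Finset.range (m+1), if compare k b = Ordering.lt then m.choose k else 0)
          = ∑ k ∈ Finset.range (m+1), if compare k b = Ordering.gt then m.choose k else 0 := by
        rw [sum_lt_as_filter, sum_gt_as_filter]
        apply Finset.sum_nbij' (fun k => m - k) (fun k => m - k) <;> intro k hk <;>
          simp only [Finset.mem_filter, Finset.mem_range] at hk ⊢
        · omega
        · omega
        · omega
        · omega
        · exact (Nat.choose_symm (by omega)).symm
      have heq : (∑ k ∈ Finset.range (m+1), if compare k b = Ordering.eq then m.choose k else 0)
          = Nat.centralBinom b := by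
        rw [sum_eq_val m b hb]
        unfold Nat.centralBinom
        rw [hab]
      have hcb := cb_bound b hb5
      have hpow : 2 ^ m = 4 ^ b := by rw [hab, pow_mul]; norm_num
      omega
  · -- lt side has at least half
    refine ⟨Ordering.lt, ?_⟩
    rw [sum_lt_as_filter]
    have hle : (∑ k ∈ (Finset.range (m+1)).filter (b ≤ ·), m.choose k)
        ≤ ∑ k ∈ (Finset.range (m+1)).filter (· < b), m.choose k := by
      have h1 : (∑ k ∈ (Finset.range (m+1)).filter (b ≤ ·), m.choose k)
          = ∑ k ∈ (Finset.range (m+1)).filter (· ≤ m - b), m.choose k := by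
        apply Finset.sum_nbij' (fun k => m - k) (fun k => m - k) <;> intro k hk <;>
          simp only [Finset.mem_filter, Finset.mem_range] at hk ⊢
        · omega
        · omega
        · omega
        · omega
        · exact (Nat.choose_symm (by omega)).symm
      rw [h1]
      apply Finset.sum_le_sum_of_subset
      intro k hk
      simp only [Finset.mem_filter, Finset.mem_range] at hk ⊢
      omega
    have htot : (∑ k ∈ (Finset.range (m+1)).filter (· < b), m.choose k)
        + (∑ k ∈ (Finset.range (m+1)).filter (b ≤ ·), m.choose k) = 2 ^ m := by
      rw [← Nat.sum_range_choose m]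
      rw [← Finset.sum_filter_add_sum_filter_not (Finset.range (m+1)) (· < b)]
      congr 1
      apply Finset.sum_congr _ (fun _ _ => rfl)
      apply Finset.filter_congr
      intro k _
      simp [Nat.not_lt]
    omega


variable {α : Type*} [DecidableEq α]

lemma symmDiff_key (A B : Finset α) (hAB : Disjoint A B) (X : Finset α) :
    compare ((symmDiff X B) ∩ (A ∪ B)).card B.card = weighOutcome A B X := by
  have hset : (symmDiff X B) ∩ (A ∪ B) = (X ∩ A) ∪ (B \ X) := by
    ext x
    simp only [Finset.mem_inter, Finset.mem_union, Finset.mem_symmDiff, Finset.mem_sdiff]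
    constructor
    · rintro ⟨⟨hx, hnB⟩ | ⟨hB, hnX⟩, hA | hB⟩
      · exact Or.inl ⟨hx, hA⟩
      · exact absurd hB hnB
      · exact Or.inr ⟨hB, hnX⟩
      · exact Or.inr ⟨hB, hnX⟩
    · rintro (⟨hx, hA⟩ | ⟨hB, hnX⟩)
      · exact ⟨Or.inl ⟨hx, fun hB => Finset.disjoint_left.1 hAB hA hB⟩, Or.inl hA⟩
      · exact ⟨Or.inr ⟨hB, hnX⟩, Or.inr hB⟩
  have hdisj : Disjoint (X ∩ A) (B \ X) := by
    refine Finset.disjoint_left.2 (fun x hx hx' => ?_)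
    exact Finset.disjoint_left.1 hAB (Finset.mem_inter.1 hx).2 (Finset.mem_sdiff.1 hx').1
  have hcard : ((symmDiff X B) ∩ (A ∪ B)).card = (X ∩ A).card + (B \ X).card := by
    rw [hset, Finset.card_union_of_disjoint hdisj]
  have hsplit : (B ∩ X).card + (B \ X).card = B.card := Finset.card_inter_add_card_sdiff B X
  have hXB : (X ∩ B).card = (B ∩ X).card := by rw [Finset.inter_comm]
  rw [hcard, weighOutcome, ← hsplit, ← hXB]
  exact compare_add_right _ _ _

lemma one_dim (S A B : Finset α) (hA : A ⊆ S) (hB : B ⊆ S) (hAB : Disjoint A B)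
    (h33 : ¬(A.card = 3 ∧ B.card = 3)) :
    ∃ o : Ordering, 45 * 2 ^ S.card ≤
      128 * (S.powerset.filter (fun X => weighOutcome A B X = o)).card := by
  have hUS : A ∪ B ⊆ S := Finset.union_subset hA hB
  have hUcard : (A ∪ B).card = A.card + B.card := Finset.card_union_of_disjoint hAB
  have hbm : B.card ≤ (A ∪ B).card := by omega
  have hmn : (A ∪ B).card ≤ S.card := Finset.card_le_card hUS
  have hex : ¬((A ∪ B).card = 6 ∧ B.card = 3) := by
    rintro ⟨h6, h3⟩; exact h33 ⟨by omega, h3⟩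
  obtain ⟨o, ho⟩ := key1D (A ∪ B).card B.card hbm hex
  refine ⟨o, ?_⟩
  have hbij : (S.powerset.filter (fun X => weighOutcome A B X = o)).card
      = (S.powerset.filter (fun Y => compare ((Y ∩ (A ∪ B)).card) B.card = o)).card := by
    apply Finset.card_bij' (fun X _ => symmDiff X B) (fun Y _ => symmDiff Y B)
    · intro X hX
      simp only [Finset.mem_filter, Finset.mem_powerset] at hX ⊢
      refine ⟨le_trans (symmDiff_le_sup : symmDiff X B ⊆ X ∪ B)
        (Finset.union_subset hX.1 hB), ?_⟩
      rw [symmDiff_key A B hAB X]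
      exact hX.2
    · intro Y hY
      simp only [Finset.mem_filter, Finset.mem_powerset] at hY ⊢
      refine ⟨le_trans (symmDiff_le_sup : symmDiff Y B ⊆ Y ∪ B)
        (Finset.union_subset hY.1 hB), ?_⟩
      rw [← symmDiff_key A B hAB (symmDiff Y B), symmDiff_symmDiff_cancel_right B Y]
      exact hY.2
    · intro X _; exact symmDiff_symmDiff_cancel_right B X
    · intro Y _; exact symmDiff_symmDiff_cancel_right B Y
  have hmach := count_profile [A ∪ B] S
    (by intro P hP; simp only [List.mem_singleton] at hP; subst hP; exact hUS)
    (List.pairwise_singleton _ _)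
    (fun l => match l with | [k] => decide (compare k B.card = o) | _ => false)
  simp only [List.map_cons, List.map_nil, List.sum_cons, List.sum_nil, Nat.add_zero] at hmach
  have hfc : (S.powerset.filter (fun X =>
        (fun l => match l with | [k] => decide (compare k B.card = o) | _ => false)
          [(X ∩ (A ∪ B)).card] = true)).card
      = (S.powerset.filter (fun Y => compare ((Y ∩ (A ∪ B)).card) B.card = o)).card := by
    apply congrArg
    apply Finset.filter_congr
    intro X _
    simp only [decide_eq_true_eq]
  have hcnt : cntL (fun l => match l with | [k] => decide (compare k B.card = o) | _ => false)
        [(A ∪ B).card]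
      = ∑ k ∈ Finset.range ((A ∪ B).card + 1),
          (if compare k B.card = o then (A ∪ B).card.choose k else 0) := by
    rw [cntL_cons]
    refine Finset.sum_congr rfl (fun k _ => ?_)
    by_cases h : compare k B.card = o
    · simp [cntL, h]
    · simp [cntL, h]
  rw [hbij, ← hfc, hmach, hcnt]
  calc 45 * 2 ^ S.card
      = (45 * 2 ^ (A ∪ B).card) * 2 ^ (S.card - (A ∪ B).card) := by
        rw [mul_assoc, ← pow_add]
        congr 2
        omega
    _ ≤ (128 * ∑ k ∈ Finset.range ((A ∪ B).card + 1),
          (if compare k B.card = o then (A ∪ B).card.choose k else 0)) *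
            2 ^ (S.card - (A ∪ B).card) := Nat.mul_le_mul_right _ ho
    _ = 128 * (2 ^ (S.card - (A ∪ B).card) * ∑ k ∈ Finset.range ((A ∪ B).card + 1),
          (if compare k B.card = o then (A ∪ B).card.choose k else 0)) := by ring

instance : Fintype Ordering :=
  ⟨⟨{Ordering.lt, Ordering.eq, Ordering.gt}, by decide⟩, by intro x; cases x <;> decide⟩

def pq (o₁ o₂ : Ordering) : List ℕ → Bool
  | [k1,k2,k3,k4,k5,k6,k7,k8] =>
      decide (compare (k1+k2+k3) (k4+k5+k6) = o₁) && decide (compare (k1+k4+k7) (k2+k5+k8) = o₂)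
  | _ => false

set_option maxRecDepth 100000 in
lemma pair_numeric_fin : ∀ a b c d : Fin 4,
    (a.1+b.1 ≤ 3 ∧ c.1+d.1 ≤ 3 ∧ a.1+c.1 ≤ 3 ∧ b.1+d.1 ≤ 3) →
    ∃ o₁ o₂ : Ordering, 15 * 2 ^ (12 - (a.1+b.1+c.1+d.1)) ≤
      128 * cntL (pq o₁ o₂) [a.1, b.1, 3-a.1-b.1, c.1, d.1, 3-c.1-d.1, 3-a.1-c.1, 3-b.1-d.1] := by
  decide

lemma pair_numeric (a b c d : ℕ) (hab : a+b ≤ 3) (hcd : c+d ≤ 3) (hac : a+c ≤ 3) (hbd : b+d ≤ 3) :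
    ∃ o₁ o₂ : Ordering, 15 * 2 ^ (12 - (a+b+c+d)) ≤
      128 * cntL (pq o₁ o₂) [a, b, 3-a-b, c, d, 3-c-d, 3-a-c, 3-b-d] := by
  have := pair_numeric_fin ⟨a, by omega⟩ ⟨b, by omega⟩ ⟨c, by omega⟩ ⟨d, by omega⟩
    ⟨hab, hcd, hac, hbd⟩
  simpa using this

lemma hsplit3 (U V T : Finset α) (dUV : Disjoint U V) (dUT : Disjoint U T) (dVT : Disjoint V T)
    (X : Finset α) : (X ∩ (U ∪ V ∪ T)).card = (X ∩ U).card + (X ∩ V).card + (X ∩ T).card := by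
  have h2 : Disjoint (X ∩ U) (X ∩ V) := dUV.mono Finset.inter_subset_right Finset.inter_subset_right
  have hUT : Disjoint (X ∩ U) (X ∩ T) := dUT.mono Finset.inter_subset_right Finset.inter_subset_right
  have hVT : Disjoint (X ∩ V) (X ∩ T) := dVT.mono Finset.inter_subset_right Finset.inter_subset_right
  rw [Finset.inter_union_distrib_left, Finset.inter_union_distrib_left,
    Finset.card_union_of_disjoint (Finset.disjoint_union_left.2 ⟨hUT, hVT⟩),
    Finset.card_union_of_disjoint h2]

lemma pair_lemma (S A₁ B₁ A₂ B₂ : Finset α)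
    (hA₁ : A₁ ⊆ S) (hB₁ : B₁ ⊆ S) (hA₂ : A₂ ⊆ S) (hB₂ : B₂ ⊆ S)
    (h₁ : Disjoint A₁ B₁) (h₂ : Disjoint A₂ B₂)
    (cA₁ : A₁.card = 3) (cB₁ : B₁.card = 3) (cA₂ : A₂.card = 3) (cB₂ : B₂.card = 3) :
    ∃ o₁ o₂ : Ordering, 15 * 2 ^ S.card ≤
      128 * (S.powerset.filter (fun X =>
        weighOutcome A₁ B₁ X = o₁ ∧ weighOutcome A₂ B₂ X = o₂)).card := by
  classical
  have e1 : ∀ x, x ∈ A₁ → x ∈ B₁ → False := fun x hx hx' => Finset.disjoint_left.1 h₁ hx hx'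
  have e2 : ∀ x, x ∈ A₂ → x ∈ B₂ → False := fun x hx hx' => Finset.disjoint_left.1 h₂ hx hx'
  -- the eight atoms
  set L : List (Finset α) := [A₁ ∩ A₂, A₁ ∩ B₂, A₁ \ (A₂ ∪ B₂), B₁ ∩ A₂, B₁ ∩ B₂,
    B₁ \ (A₂ ∪ B₂), A₂ \ (A₁ ∪ B₁), B₂ \ (A₁ ∪ B₁)] with hLdef
  have hsub : ∀ P ∈ L, P ⊆ S := by
    intro P hP
    simp only [hLdef, List.mem_cons, List.not_mem_nil, or_false] at hP
    rcases hP with rfl | rfl | rfl | rfl | rfl | rfl | rfl | rfl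
    · exact (Finset.inter_subset_left).trans hA₁
    · exact (Finset.inter_subset_left).trans hA₁
    · exact (Finset.sdiff_subset).trans hA₁
    · exact (Finset.inter_subset_left).trans hB₁
    · exact (Finset.inter_subset_left).trans hB₁
    · exact (Finset.sdiff_subset).trans hB₁
    · exact (Finset.sdiff_subset).trans hA₂
    · exact (Finset.sdiff_subset).trans hB₂
  have hpair : L.Pairwise Disjoint := by
    rw [hLdef]
    refine List.Pairwise.cons ?_ (List.Pairwise.cons ?_ (List.Pairwise.cons ?_
      (List.Pairwise.cons ?_ (List.Pairwise.cons ?_ (List.Pairwise.cons ?_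
      (List.Pairwise.cons ?_ (List.Pairwise.cons ?_ List.Pairwise.nil)))))))
    all_goals intro b hb
    all_goals simp only [List.mem_cons, List.not_mem_nil, or_false] at hb
    all_goals try rcases hb with rfl | rfl | rfl | rfl | rfl | rfl | rfl | rfl
    all_goals
      rw [Finset.disjoint_left]
      intro x hx hx'
      simp only [Finset.mem_inter, Finset.mem_sdiff, Finset.mem_union] at hx hx'
      first
        | exact e1 x hx.1 hx'.1
        | exact e2 x hx.2 hx'.2
        | exact e1 x hx'.1 hx.1
        | exact e2 x hx'.2 hx.2
        | tauto
  -- decompositions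
  have eA₁ : A₁ = A₁ ∩ A₂ ∪ A₁ ∩ B₂ ∪ A₁ \ (A₂ ∪ B₂) := by
    ext x
    simp only [Finset.mem_union, Finset.mem_inter, Finset.mem_sdiff]
    tauto
  have eB₁ : B₁ = B₁ ∩ A₂ ∪ B₁ ∩ B₂ ∪ B₁ \ (A₂ ∪ B₂) := by
    ext x
    simp only [Finset.mem_union, Finset.mem_inter, Finset.mem_sdiff]
    tauto
  have eA₂ : A₂ = A₁ ∩ A₂ ∪ B₁ ∩ A₂ ∪ A₂ \ (A₁ ∪ B₁) := by
    ext x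
    simp only [Finset.mem_union, Finset.mem_inter, Finset.mem_sdiff]
    tauto
  have eB₂ : B₂ = A₁ ∩ B₂ ∪ B₁ ∩ B₂ ∪ B₂ \ (A₁ ∪ B₁) := by
    ext x
    simp only [Finset.mem_union, Finset.mem_inter, Finset.mem_sdiff]
    tauto
  -- disjointness of the triples
  have dis : ∀ U V : Finset α,
      ((∀ x, x ∈ U → x ∈ V → False) → Disjoint U V) := by
    intro U V h
    rw [Finset.disjoint_left]
    exact fun {x} hx hx' => (h x hx hx').elim
  have dA12 : Disjoint (A₁ ∩ A₂) (A₁ ∩ B₂) := dis _ _ (by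
    intro x hx hx'
    simp only [Finset.mem_inter] at hx hx'
    exact e2 x hx.2 hx'.2)
  have dA13 : Disjoint (A₁ ∩ A₂) (A₁ \ (A₂ ∪ B₂)) := dis _ _ (by
    intro x hx hx'
    simp only [Finset.mem_inter, Finset.mem_sdiff, Finset.mem_union] at hx hx'
    tauto)
  have dA23 : Disjoint (A₁ ∩ B₂) (A₁ \ (A₂ ∪ B₂)) := dis _ _ (by
    intro x hx hx'
    simp only [Finset.mem_inter, Finset.mem_sdiff, Finset.mem_union] at hx hx'
    tauto)
  have dB12 : Disjoint (B₁ ∩ A₂) (B₁ ∩ B₂) := dis _ _ (by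
    intro x hx hx'
    simp only [Finset.mem_inter] at hx hx'
    exact e2 x hx.2 hx'.2)
  have dB13 : Disjoint (B₁ ∩ A₂) (B₁ \ (A₂ ∪ B₂)) := dis _ _ (by
    intro x hx hx'
    simp only [Finset.mem_inter, Finset.mem_sdiff, Finset.mem_union] at hx hx'
    tauto)
  have dB23 : Disjoint (B₁ ∩ B₂) (B₁ \ (A₂ ∪ B₂)) := dis _ _ (by
    intro x hx hx'
    simp only [Finset.mem_inter, Finset.mem_sdiff, Finset.mem_union] at hx hx'
    tauto)
  have dC12 : Disjoint (A₁ ∩ A₂) (B₁ ∩ A₂) := dis _ _ (by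
    intro x hx hx'
    simp only [Finset.mem_inter] at hx hx'
    exact e1 x hx.1 hx'.1)
  have dC13 : Disjoint (A₁ ∩ A₂) (A₂ \ (A₁ ∪ B₁)) := dis _ _ (by
    intro x hx hx'
    simp only [Finset.mem_inter, Finset.mem_sdiff, Finset.mem_union] at hx hx'
    tauto)
  have dC23 : Disjoint (B₁ ∩ A₂) (A₂ \ (A₁ ∪ B₁)) := dis _ _ (by
    intro x hx hx'
    simp only [Finset.mem_inter, Finset.mem_sdiff, Finset.mem_union] at hx hx'
    tauto)
  have dD12 : Disjoint (A₁ ∩ B₂) (B₁ ∩ B₂) := dis _ _ (by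
    intro x hx hx'
    simp only [Finset.mem_inter] at hx hx'
    exact e1 x hx.1 hx'.1)
  have dD13 : Disjoint (A₁ ∩ B₂) (B₂ \ (A₁ ∪ B₁)) := dis _ _ (by
    intro x hx hx'
    simp only [Finset.mem_inter, Finset.mem_sdiff, Finset.mem_union] at hx hx'
    tauto)
  have dD23 : Disjoint (B₁ ∩ B₂) (B₂ \ (A₁ ∪ B₁)) := dis _ _ (by
    intro x hx hx'
    simp only [Finset.mem_inter, Finset.mem_sdiff, Finset.mem_union] at hx hx'
    tauto)
  -- card identities
  have hA1card : (A₁ ∩ A₂).card + (A₁ ∩ B₂).card + (A₁ \ (A₂ ∪ B₂)).card = 3 := by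
    rw [← cA₁]
    conv_rhs => rw [eA₁]
    rw [Finset.card_union_of_disjoint (Finset.disjoint_union_left.2 ⟨dA13, dA23⟩),
      Finset.card_union_of_disjoint dA12]
  have hB1card : (B₁ ∩ A₂).card + (B₁ ∩ B₂).card + (B₁ \ (A₂ ∪ B₂)).card = 3 := by
    rw [← cB₁]
    conv_rhs => rw [eB₁]
    rw [Finset.card_union_of_disjoint (Finset.disjoint_union_left.2 ⟨dB13, dB23⟩),
      Finset.card_union_of_disjoint dB12]
  have hA2card : (A₁ ∩ A₂).card + (B₁ ∩ A₂).card + (A₂ \ (A₁ ∪ B₁)).card = 3 := by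
    rw [← cA₂]
    conv_rhs => rw [eA₂]
    rw [Finset.card_union_of_disjoint (Finset.disjoint_union_left.2 ⟨dC13, dC23⟩),
      Finset.card_union_of_disjoint dC12]
  have hB2card : (A₁ ∩ B₂).card + (B₁ ∩ B₂).card + (B₂ \ (A₁ ∪ B₁)).card = 3 := by
    rw [← cB₂]
    conv_rhs => rw [eB₂]
    rw [Finset.card_union_of_disjoint (Finset.disjoint_union_left.2 ⟨dD13, dD23⟩),
      Finset.card_union_of_disjoint dD12]
  obtain ⟨o₁, o₂, hnum⟩ := pair_numeric (A₁ ∩ A₂).card (A₁ ∩ B₂).card (B₁ ∩ A₂).card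
    (B₁ ∩ B₂).card (by omega) (by omega) (by omega) (by omega)
  refine ⟨o₁, o₂, ?_⟩
  -- predicate equivalence
  have hiff : ∀ X ∈ S.powerset,
      (weighOutcome A₁ B₁ X = o₁ ∧ weighOutcome A₂ B₂ X = o₂)
        ↔ (pq o₁ o₂ (L.map (fun P => (X ∩ P).card)) = true) := by
    intro X _
    have k1 : (X ∩ A₁).card = (X ∩ (A₁ ∩ A₂)).card + (X ∩ (A₁ ∩ B₂)).card
        + (X ∩ (A₁ \ (A₂ ∪ B₂))).card := by
      conv_lhs => rw [eA₁]
      exact hsplit3 _ _ _ dA12 dA13 dA23 X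
    have k2 : (X ∩ B₁).card = (X ∩ (B₁ ∩ A₂)).card + (X ∩ (B₁ ∩ B₂)).card
        + (X ∩ (B₁ \ (A₂ ∪ B₂))).card := by
      conv_lhs => rw [eB₁]
      exact hsplit3 _ _ _ dB12 dB13 dB23 X
    have k3 : (X ∩ A₂).card = (X ∩ (A₁ ∩ A₂)).card + (X ∩ (B₁ ∩ A₂)).card
        + (X ∩ (A₂ \ (A₁ ∪ B₁))).card := by
      conv_lhs => rw [eA₂]
      exact hsplit3 _ _ _ dC12 dC13 dC23 X
    have k4 : (X ∩ B₂).card = (X ∩ (A₁ ∩ B₂)).card + (X ∩ (B₁ ∩ B₂)).card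
        + (X ∩ (B₂ \ (A₁ ∪ B₁))).card := by
      conv_lhs => rw [eB₂]
      exact hsplit3 _ _ _ dD12 dD13 dD23 X
    simp only [hLdef, List.map_cons, List.map_nil, pq, Bool.and_eq_true, decide_eq_true_eq]
    rw [weighOutcome, weighOutcome, k1, k2, k3, k4]
  have hmach := count_profile L S hsub hpair (pq o₁ o₂)
  rw [congrArg Finset.card (Finset.filter_congr hiff), hmach]
  -- numeric sizes
  have s3 : (A₁ \ (A₂ ∪ B₂)).card = 3 - (A₁ ∩ A₂).card - (A₁ ∩ B₂).card := by omega
  have s6 : (B₁ \ (A₂ ∪ B₂)).card = 3 - (B₁ ∩ A₂).card - (B₁ ∩ B₂).card := by omega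
  have s7 : (A₂ \ (A₁ ∪ B₁)).card = 3 - (A₁ ∩ A₂).card - (B₁ ∩ A₂).card := by omega
  have s8 : (B₂ \ (A₁ ∪ B₁)).card = 3 - (A₁ ∩ B₂).card - (B₁ ∩ B₂).card := by omega
  have hsle : (L.map Finset.card).sum ≤ S.card := sum_cards_le S L hsub hpair
  have hLmap : L.map Finset.card = [(A₁ ∩ A₂).card, (A₁ ∩ B₂).card,
      3 - (A₁ ∩ A₂).card - (A₁ ∩ B₂).card, (B₁ ∩ A₂).card, (B₁ ∩ B₂).card,
      3 - (B₁ ∩ A₂).card - (B₁ ∩ B₂).card,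
      3 - (A₁ ∩ A₂).card - (B₁ ∩ A₂).card,
      3 - (A₁ ∩ B₂).card - (B₁ ∩ B₂).card] := by
    simp only [hLdef, List.map_cons, List.map_nil, s3, s6, s7, s8]
  have hsum2 : ([(A₁ ∩ A₂).card, (A₁ ∩ B₂).card,
      3 - (A₁ ∩ A₂).card - (A₁ ∩ B₂).card, (B₁ ∩ A₂).card, (B₁ ∩ B₂).card,
      3 - (B₁ ∩ A₂).card - (B₁ ∩ B₂).card,
      3 - (A₁ ∩ A₂).card - (B₁ ∩ A₂).card,
      3 - (A₁ ∩ B₂).card - (B₁ ∩ B₂).card] : List ℕ).sum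
      = 12 - ((A₁ ∩ A₂).card + (A₁ ∩ B₂).card + (B₁ ∩ A₂).card + (B₁ ∩ B₂).card) := by
    simp only [List.sum_cons, List.sum_nil]
    omega
  rw [hLmap] at hsle
  rw [hsum2] at hsle
  rw [hLmap, hsum2]
  calc 15 * 2 ^ S.card
      = (15 * 2 ^ (12 - ((A₁ ∩ A₂).card + (A₁ ∩ B₂).card + (B₁ ∩ A₂).card + (B₁ ∩ B₂).card)))
        * 2 ^ (S.card - (12 - ((A₁ ∩ A₂).card + (A₁ ∩ B₂).card + (B₁ ∩ A₂).card + (B₁ ∩ B₂).card))) := by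
        rw [mul_assoc, ← pow_add]
        congr 2
        omega
    _ ≤ (128 * cntL (pq o₁ o₂) [(A₁ ∩ A₂).card, (A₁ ∩ B₂).card,
          3 - (A₁ ∩ A₂).card - (A₁ ∩ B₂).card, (B₁ ∩ A₂).card, (B₁ ∩ B₂).card,
          3 - (B₁ ∩ A₂).card - (B₁ ∩ B₂).card,
          3 - (A₁ ∩ A₂).card - (B₁ ∩ A₂).card,
          3 - (A₁ ∩ B₂).card - (B₁ ∩ B₂).card])
        * 2 ^ (S.card - (12 - ((A₁ ∩ A₂).card + (A₁ ∩ B₂).card + (B₁ ∩ A₂).card + (B₁ ∩ B₂).card))) :=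
        Nat.mul_le_mul_right _ hnum
    _ = 128 * (2 ^ (S.card - (12 - ((A₁ ∩ A₂).card + (A₁ ∩ B₂).card + (B₁ ∩ A₂).card + (B₁ ∩ B₂).card)))
          * cntL (pq o₁ o₂) [(A₁ ∩ A₂).card, (A₁ ∩ B₂).card,
          3 - (A₁ ∩ A₂).card - (A₁ ∩ B₂).card, (B₁ ∩ A₂).card, (B₁ ∩ B₂).card,
          3 - (B₁ ∩ A₂).card - (B₁ ∩ B₂).card,
          3 - (A₁ ∩ A₂).card - (B₁ ∩ A₂).card,
          3 - (A₁ ∩ B₂).card - (B₁ ∩ B₂).card]) := by ring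

lemma exists_big_fiber (s : Finset (Finset α)) (Φ : Finset α → (Fin 3 → Ordering))
    (T : Finset (Fin 3 → Ordering)) (hT : T.Nonempty) :
    ∃ v ∈ T, (s.filter (fun X => Φ X ∈ T)).card ≤ T.card * (s.filter (fun X => Φ X = v)).card := by
  classical
  obtain ⟨v, hvT, hmax⟩ := Finset.exists_max_image T
    (fun w => (s.filter (fun X => Φ X = w)).card) hT
  refine ⟨v, hvT, ?_⟩
  have hfib : ∀ X ∈ s.filter (fun X => Φ X ∈ T), Φ X ∈ T := fun X hX =>
    (Finset.mem_filter.1 hX).2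
  rw [Finset.card_eq_sum_card_fiberwise hfib]
  calc ∑ w ∈ T, ((s.filter (fun X => Φ X ∈ T)).filter (fun X => Φ X = w)).card
      ≤ ∑ _w ∈ T, (s.filter (fun X => Φ X = v)).card := by
        refine Finset.sum_le_sum (fun w hw => ?_)
        refine le_trans (Finset.card_le_card ?_) (hmax w hw)
        intro X hX
        simp only [Finset.mem_filter] at hX ⊢
        exact ⟨hX.1.1, hX.2⟩
    _ = T.card * (s.filter (fun X => Φ X = v)).card := by
        rw [Finset.sum_const, smul_eq_mul]

lemma fin3_tri : ∀ i j : Fin 3, j = i ∨ j = i + 1 ∨ j = i + 2 := by decide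

end Zeta3


/-- The bound `ζ₃ ≥ 5 · 2 ^ (n − 7)` used in the proof of Lemma 3: for any finite set `S`
with `|S| = n` and any three weighings `(A i, B i)`, `i = 1, 2, 3`, on `S`, there are
outcomes `v i ∈ {<, =, >}` such that `2 ^ 7` times the number of subsets `X ⊆ S` whose
outcome under `(A i, B i)` is `v i` for each `i` is at least `5 · 2 ^ n`. -/
theorem zeta_three_bound {α : Type*} [DecidableEq α]
    (S : Finset α) (n : ℕ) (hS : S.card = n)
    (A B : Fin 3 → Finset α)
    (hA : ∀ i, A i ⊆ S) (hB : ∀ i, B i ⊆ S) (hAB : ∀ i, Disjoint (A i) (B i)) :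
    ∃ v : Fin 3 → Ordering,
      5 * 2 ^ n ≤ 2 ^ 7 * (S.powerset.filter
        (fun X => ∀ i, weighOutcome (A i) (B i) X = v i)).card := by
  classical
  subst hS
  have h128 : (2 : ℕ) ^ 7 = 128 := by norm_num
  set Φ : Finset α → (Fin 3 → Ordering) := fun X i => weighOutcome (A i) (B i) X with hΦ
  have hfilter_eq : ∀ v : Fin 3 → Ordering,
      (S.powerset.filter (fun X => ∀ i, weighOutcome (A i) (B i) X = v i))
        = (S.powerset.filter (fun X => Φ X = v)) := by
    intro v
    refine Finset.filter_congr (fun X _ => ?_)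
    rw [hΦ]
    exact (funext_iff).symm
  by_cases hall : ∀ i : Fin 3, (A i).card = 3 ∧ (B i).card = 3
  · obtain ⟨o₁, o₂, h15⟩ := Zeta3.pair_lemma S (A 0) (B 0) (A 1) (B 1)
      (hA 0) (hB 0) (hA 1) (hB 1) (hAB 0) (hAB 1)
      (hall 0).1 (hall 0).2 (hall 1).1 (hall 1).2
    set T : Finset (Fin 3 → Ordering) :=
      Finset.univ.filter (fun v => v 0 = o₁ ∧ v 1 = o₂) with hT
    have hTne : T.Nonempty := by
      refine ⟨fun j => if j = 0 then o₁ else o₂, ?_⟩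
      simp [hT]
    have hTcard : T.card ≤ 3 := by
      have h3 : (Finset.univ : Finset Ordering).card = 3 := by decide
      have := Finset.card_le_card_of_injOn (fun v : Fin 3 → Ordering => v 2)
        (s := T) (t := Finset.univ)
        (fun v _ => Finset.mem_univ _) ?_
      · omega
      · intro v hv w hw hvw
        simp only [hT, Finset.coe_filter, Set.mem_setOf_eq, Finset.mem_univ, true_and] at hv hw
        funext j
        rcases Zeta3.fin3_tri 0 j with rfl | rfl | rfl
        · rw [hv.1, hw.1]
        · rw [show (0 : Fin 3) + 1 = 1 from rfl, hv.2, hw.2]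
        · exact hvw
    have hceq : (S.powerset.filter (fun X => Φ X ∈ T)).card
        = (S.powerset.filter (fun X =>
            weighOutcome (A 0) (B 0) X = o₁ ∧ weighOutcome (A 1) (B 1) X = o₂)).card := by
      refine congrArg Finset.card (Finset.filter_congr (fun X _ => ?_))
      simp [hT, hΦ]
    obtain ⟨v, _, hle⟩ := Zeta3.exists_big_fiber S.powerset Φ T hTne
    refine ⟨v, ?_⟩
    rw [hfilter_eq v, h128]
    have h1 : 15 * 2 ^ S.card ≤
        128 * (T.card * (S.powerset.filter (fun X => Φ X = v)).card) := by
      rw [hceq] at hle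
      calc 15 * 2 ^ S.card
          ≤ 128 * (S.powerset.filter (fun X =>
              weighOutcome (A 0) (B 0) X = o₁ ∧ weighOutcome (A 1) (B 1) X = o₂)).card := h15
        _ ≤ 128 * (T.card * (S.powerset.filter (fun X => Φ X = v)).card) := by
            exact Nat.mul_le_mul_left _ (hceq ▸ hle)
    have h2 : T.card * (S.powerset.filter (fun X => Φ X = v)).card
        ≤ 3 * (S.powerset.filter (fun X => Φ X = v)).card :=
      Nat.mul_le_mul_right _ hTcard
    omega
  · obtain ⟨i, hi⟩ := not_forall.1 hall
    obtain ⟨o, h45⟩ := Zeta3.one_dim S (A i) (B i) (hA i) (hB i) (hAB i) hi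
    set T : Finset (Fin 3 → Ordering) :=
      Finset.univ.filter (fun v => v i = o) with hT
    have hTne : T.Nonempty := by
      refine ⟨fun _ => o, ?_⟩
      simp [hT]
    have hTcard : T.card ≤ 9 := by
      have h9 : (Finset.univ : Finset (Ordering × Ordering)).card = 9 := by decide
      have := Finset.card_le_card_of_injOn
        (fun v : Fin 3 → Ordering => (v (i+1), v (i+2)))
        (s := T) (t := Finset.univ)
        (fun v _ => Finset.mem_univ _) ?_
      · omega
      · intro v hv w hw hvw
        simp only [hT, Finset.coe_filter, Set.mem_setOf_eq, Finset.mem_univ, true_and] at hv hw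
        simp only [Prod.mk.injEq] at hvw
        funext j
        rcases Zeta3.fin3_tri i j with rfl | rfl | rfl
        · rw [hv, hw]
        · exact hvw.1
        · exact hvw.2
    have hceq : (S.powerset.filter (fun X => Φ X ∈ T)).card
        = (S.powerset.filter (fun X => weighOutcome (A i) (B i) X = o)).card := by
      refine congrArg Finset.card (Finset.filter_congr (fun X _ => ?_))
      simp [hT, hΦ]
    obtain ⟨v, _, hle⟩ := Zeta3.exists_big_fiber S.powerset Φ T hTne
    refine ⟨v, ?_⟩
    rw [hfilter_eq v, h128]
    have h1 : 45 * 2 ^ S.card ≤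
        128 * (T.card * (S.powerset.filter (fun X => Φ X = v)).card) := by
      calc 45 * 2 ^ S.card
          ≤ 128 * (S.powerset.filter (fun X => weighOutcome (A i) (B i) X = o)).card := h45
        _ ≤ 128 * (T.card * (S.powerset.filter (fun X => Φ X = v)).card) := by
            exact Nat.mul_le_mul_left _ (hceq ▸ hle)
    have h2 : T.card * (S.powerset.filter (fun X => Φ X = v)).card
        ≤ 9 * (S.powerset.filter (fun X => Φ X = v)).card :=
      Nat.mul_le_mul_right _ hTcard
    omega
end
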